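/- arXiv:1707.08650 — 5 statements merged into one kernel-verified Lean document; each statement's English description precedes it below -/
import Mathlib

section
/- Let |W⟩ = (|001⟩ + |010⟩ + |100⟩)/√3 ∈ ℂ² ⊗ ℂ² ⊗ ℂ² and ρ_W = Tr₃(|W⟩⟨W|). If σ is a density matrix indexed by Fin 2 × Fin 2 × Fin 2 such that Tr₂ σ = ρ_W and Tr₃ σ = ρ_W, then σ = |W⟩⟨W|; that is, |W⟩⟨W| is the unique tripartite state both of whose two bipartite marginals obtained by tracing out the second, respectively the third, qubit equal ρ_W. -/
open Matrix BigOperators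
open scoped ComplexOrder

noncomputable section

/-- A density matrix: positive semidefinite with trace 1. -/
def IsDensity {ι : Type*} [Fintype ι] (M : Matrix ι ι ℂ) : Prop :=
  M.PosSemidef ∧ M.trace = 1

/-- The Choi matrix of a linear map between matrix spaces, indexed by (output × input). -/
def choi {ι κ : Type*} [Fintype ι] [DecidableEq ι]
    (Φ : Matrix ι ι ℂ →ₗ[ℂ] Matrix κ κ ℂ) : Matrix (κ × ι) (κ × ι) ℂ :=
  fun p q => Φ (Matrix.single p.2 q.2 1) p.1 q.1

/-- A quantum channel: trace preserving with positive semidefinite Choi matrix. -/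
def IsQChannel {ι κ : Type*} [Fintype ι] [DecidableEq ι] [Fintype κ]
    (Φ : Matrix ι ι ℂ →ₗ[ℂ] Matrix κ κ ℂ) : Prop :=
  (∀ X, (Φ X).trace = X.trace) ∧ (choi Φ).PosSemidef

/-- The tensor product `Φ ⊗ Ψ` of maps on matrix spaces, determined by
`(Φ ⊗ Ψ)(X ⊗ₖ Y) = (Φ X) ⊗ₖ (Ψ Y)`. -/
def tmap {α β γ δ : Type*} [Fintype α] [DecidableEq α] [Fintype γ] [DecidableEq γ]
    (Φ : Matrix α α ℂ → Matrix β β ℂ) (Ψ : Matrix γ γ ℂ → Matrix δ δ ℂ)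
    (M : Matrix (α × γ) (α × γ) ℂ) : Matrix (β × δ) (β × δ) ℂ :=
  fun p q => ∑ a, ∑ a', ∑ c, ∑ c', M (a, c) (a', c') *
    (Φ (Matrix.single a a' 1) p.1 q.1 * Ψ (Matrix.single c c' 1) p.2 q.2)

/-- Partial trace over the second factor of a bipartite matrix. -/
def ptr2 {α β : Type*} [Fintype β] (M : Matrix (α × β) (α × β) ℂ) : Matrix α α ℂ :=
  fun a a' => ∑ b, M (a, b) (a', b)

/-- Partial trace over the first factor of a bipartite matrix. -/
def ptr1 {α β : Type*} [Fintype α] (M : Matrix (α × β) (α × β) ℂ) : Matrix β β ℂ :=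
  fun b b' => ∑ a, M (a, b) (a, b')

/-- Compatibility of two quantum channels: they arise as the two marginals of a single
channel into the tensor product. -/
def Compatible {n : ℕ} (Φ₁ Φ₂ : Matrix (Fin n) (Fin n) ℂ →ₗ[ℂ] Matrix (Fin n) (Fin n) ℂ) : Prop :=
  ∃ Φ : Matrix (Fin n) (Fin n) ℂ →ₗ[ℂ] Matrix (Fin n × Fin n) (Fin n × Fin n) ℂ,
    IsQChannel Φ ∧ ∀ ρ : Matrix (Fin n) (Fin n) ℂ, IsDensity ρ →
      ptr2 (Φ ρ) = Φ₁ ρ ∧ ptr1 (Φ ρ) = Φ₂ ρ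

/-- Partial trace over the third factor of a tripartite matrix. -/
def ptrace3 {α β γ : Type*} [Fintype γ] (M : Matrix (α × β × γ) (α × β × γ) ℂ) :
    Matrix (α × β) (α × β) ℂ :=
  fun p q => ∑ c, M (p.1, p.2, c) (q.1, q.2, c)

/-- Partial trace over the second factor of a tripartite matrix. -/
def ptrace2 {α β γ : Type*} [Fintype β] (M : Matrix (α × β × γ) (α × β × γ) ℂ) :
    Matrix (α × γ) (α × γ) ℂ :=
  fun p q => ∑ b, M (p.1, b, p.2) (q.1, b, q.2)

/-- The W vector `(|001⟩ + |010⟩ + |100⟩)/√3`. -/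
def wVec : Fin 2 × Fin 2 × Fin 2 → ℂ :=
  fun t => if t = (0, 0, 1) ∨ t = (0, 1, 0) ∨ t = (1, 0, 0)
    then (((Real.sqrt 3)⁻¹ : ℝ) : ℂ) else 0

/-- The projector `|W⟩⟨W|` onto the W state. -/
def wProj : Matrix (Fin 2 × Fin 2 × Fin 2) (Fin 2 × Fin 2 × Fin 2) ℂ :=
  fun p q => wVec p * (starRingEnd ℂ) (wVec q)

/-- `ρ_W`, the two-qubit marginal of the W state. -/
def rhoW : Matrix (Fin 2 × Fin 2) (Fin 2 × Fin 2) ℂ := ptrace3 wProj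

lemma sq3 : (((Real.sqrt 3)⁻¹ : ℝ) : ℂ) * (((Real.sqrt 3)⁻¹ : ℝ) : ℂ) = 1/3 := by
  rw [← Complex.ofReal_mul, ← mul_inv, Real.mul_self_sqrt (by norm_num)]
  norm_num

lemma sq3' : ((Real.sqrt 3 : ℝ) : ℂ)⁻¹ * ((Real.sqrt 3 : ℝ) : ℂ)⁻¹ = 3⁻¹ := by
  rw [← mul_inv, ← Complex.ofReal_mul, Real.mul_self_sqrt (by norm_num)]
  norm_num

set_option maxHeartbeats 1600000

/-- `|W⟩⟨W|` is the unique tripartite density matrix whose marginals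
obtained by tracing out the second, respectively third, qubit both equal `ρ_W`. -/
theorem wProj_unique
    (σ : Matrix (Fin 2 × Fin 2 × Fin 2) (Fin 2 × Fin 2 × Fin 2) ℂ)
    (hσ : IsDensity σ) (h2 : ptrace2 σ = rhoW) (h3 : ptrace3 σ = rhoW) :
    σ = wProj :=
  by
  obtain ⟨B, hB⟩ : ∃ B : Matrix (Fin 2 × Fin 2 × Fin 2) (Fin 2 × Fin 2 × Fin 2) ℂ, σ = Bᴴ * B := by
    open scoped MatrixOrder in
    have h0 : 0 ≤ σ := Matrix.nonneg_iff_posSemidef.mpr hσ.1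
    open scoped MatrixOrder in
    exact ⟨CFC.sqrt σ, by
      rw [show (CFC.sqrt σ)ᴴ = CFC.sqrt σ from (CFC.sqrt_nonneg σ).isSelfAdjoint.star_eq,
        CFC.sqrt_mul_sqrt_self σ h0]⟩
  set c : Fin 2 × Fin 2 × Fin 2 → EuclideanSpace ℂ (Fin 2 × Fin 2 × Fin 2) :=
    fun p => (WithLp.equiv 2 _).symm (fun k => B k p) with hc
  have hσc : ∀ p q, σ p q = inner ℂ (c p) (c q) := by
    intro p q
    simp [hB, Matrix.mul_apply, Matrix.conjTranspose_apply, hc, PiLp.inner_apply,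
      RCLike.inner_apply, mul_comm]
  have hself : ∀ p, σ p p = ((‖c p‖ : ℝ) : ℂ) ^ 2 := fun p =>
    (hσc p p).trans (inner_self_eq_norm_sq_to_K (c p))
  -- rhoW entries
  have r1 : rhoW (1,1) (1,1) = 0 := by
    simp [rhoW, ptrace3, wProj, wVec, Fin.sum_univ_two, Prod.ext_iff]
  have r2 : rhoW (0,0) (0,0) = 1/3 := by
    simp [rhoW, ptrace3, wProj, wVec, Fin.sum_univ_two, Prod.ext_iff, Complex.conj_ofReal, sq3, sq3']
  have r3 : rhoW (0,1) (0,1) = 1/3 := by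
    simp [rhoW, ptrace3, wProj, wVec, Fin.sum_univ_two, Prod.ext_iff, Complex.conj_ofReal, sq3, sq3']
  have r4 : rhoW (0,1) (1,0) = 1/3 := by
    simp [rhoW, ptrace3, wProj, wVec, Fin.sum_univ_two, Prod.ext_iff, Complex.conj_ofReal, sq3, sq3']
  have r5 : rhoW (1,0) (1,0) = 1/3 := by
    simp [rhoW, ptrace3, wProj, wVec, Fin.sum_univ_two, Prod.ext_iff, Complex.conj_ofReal, sq3, sq3']
  -- zero columns from vanishing diagonal pairs
  have hz : ∀ p q, σ p p + σ q q = 0 → c p = 0 ∧ c q = 0 := by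
    intro p q h
    rw [hself, hself] at h
    have h' : ‖c p‖ ^ 2 + ‖c q‖ ^ 2 = 0 := by exact_mod_cast h
    have hp : ‖c p‖ = 0 := by nlinarith [sq_nonneg ‖c p‖, sq_nonneg ‖c q‖]
    have hq : ‖c q‖ = 0 := by nlinarith [sq_nonneg ‖c p‖, sq_nonneg ‖c q‖]
    exact ⟨norm_eq_zero.mp hp, norm_eq_zero.mp hq⟩
  have A1 : σ (1,1,0) (1,1,0) + σ (1,1,1) (1,1,1) = 0 := by
    have := congrFun (congrFun h3 (1,1)) (1,1)
    simp only [ptrace3, Fin.sum_univ_two] at this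
    rw [r1] at this
    exact this
  obtain ⟨c110, c111⟩ := hz _ _ A1
  have B1 : σ (1,0,1) (1,0,1) + σ (1,1,1) (1,1,1) = 0 := by
    have := congrFun (congrFun h2 (1,1)) (1,1)
    simp only [ptrace2, Fin.sum_univ_two] at this
    rw [r1] at this
    exact this
  obtain ⟨c101, -⟩ := hz _ _ B1
  have B2 : σ (1,0,0) (1,0,0) + σ (1,1,0) (1,1,0) = 1/3 := by
    have := congrFun (congrFun h2 (1,0)) (1,0)
    simp only [ptrace2, Fin.sum_univ_two] at this
    rw [r5] at this
    exact this
  have n100 : ‖c (1,0,0)‖ ^ 2 = 1/3 := by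
    rw [hself, hσc, c110, inner_zero_right, add_zero,
      show (1/3 : ℂ) = ((1/3 : ℝ) : ℂ) by norm_num] at B2
    exact_mod_cast B2
  have A2 : σ (0,0,0) (0,0,0) + σ (0,0,1) (0,0,1) = 1/3 := by
    have := congrFun (congrFun h3 (0,0)) (0,0)
    simp only [ptrace3, Fin.sum_univ_two] at this
    rw [r2] at this
    exact this
  have A3 : σ (0,1,0) (0,1,0) + σ (0,1,1) (0,1,1) = 1/3 := by
    have := congrFun (congrFun h3 (0,1)) (0,1)
    simp only [ptrace3, Fin.sum_univ_two] at this
    rw [r3] at this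
    exact this
  have A4 : σ (0,1,0) (1,0,0) + σ (0,1,1) (1,0,1) = 1/3 := by
    have := congrFun (congrFun h3 (0,1)) (1,0)
    simp only [ptrace3, Fin.sum_univ_two] at this
    rw [r4] at this
    exact this
  have B3 : σ (0,0,1) (1,0,0) + σ (0,1,1) (1,1,0) = 1/3 := by
    have := congrFun (congrFun h2 (0,1)) (1,0)
    simp only [ptrace2, Fin.sum_univ_two] at this
    rw [r4] at this
    exact this
  have hip2 : inner ℂ (c (0,1,0)) (c (1,0,0)) = (1/3 : ℂ) := by
    rw [hσc, hσc, c101, inner_zero_right, add_zero] at A4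
    exact A4
  have hip1 : inner ℂ (c (0,0,1)) (c (1,0,0)) = (1/3 : ℂ) := by
    rw [hσc, hσc, c110, inner_zero_right, add_zero] at B3
    exact B3
  have h13 : ‖(1/3 : ℂ)‖ = 1/3 := by
    rw [show (1/3 : ℂ) = ((1/3 : ℝ) : ℂ) by norm_num, Complex.norm_real]
    norm_num
  -- saturation of Cauchy-Schwarz forces the remaining diagonals
  have hsat : ∀ p p', inner ℂ (c p) (c (1,0,0)) = (1/3 : ℂ) →
      σ p p + σ p' p' = 1/3 → c p = c (1,0,0) ∧ c p' = 0 := by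
    intro p p' hip hA
    have hcs : (1/3 : ℝ) ≤ ‖c p‖ * ‖c (1,0,0)‖ := by
      have := norm_inner_le_norm (𝕜 := ℂ) (c p) (c (1,0,0))
      rwa [hip, h13] at this
    rw [hself, hself, show (1/3 : ℂ) = ((1/3 : ℝ) : ℂ) by norm_num] at hA
    have hA' : ‖c p‖ ^ 2 + ‖c p'‖ ^ 2 = 1/3 := by exact_mod_cast hA
    have ha2 : ‖c p‖ ^ 2 = 1/3 := by
      nlinarith [sq_nonneg (‖c p‖ - ‖c (1,0,0)‖), sq_nonneg ‖c p'‖]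
    have hp'2 : ‖c p'‖ ^ 2 = 0 := by linarith
    have hp' : ‖c p'‖ = 0 := by
      have := sq_nonneg ‖c p'‖
      nlinarith [norm_nonneg (c p')]
    have hnp : ‖c p‖ = ‖c (1,0,0)‖ := by
      rw [show ‖c p‖ = Real.sqrt (‖c p‖ ^ 2) from (Real.sqrt_sq (norm_nonneg _)).symm,
        show ‖c (1,0,0)‖ = Real.sqrt (‖c (1,0,0)‖ ^ 2) from (Real.sqrt_sq (norm_nonneg _)).symm,
        ha2, n100]
    have hprod : ‖c p‖ * ‖c (1,0,0)‖ = 1/3 := by nlinarith [norm_nonneg (c p)]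
    have heq : inner ℂ (c p) (c (1,0,0)) = ((‖c p‖ : ℝ) : ℂ) * ((‖c (1,0,0)‖ : ℝ) : ℂ) := by
      rw [hip, ← Complex.ofReal_mul, hprod]; norm_num
    have hsmul := inner_eq_norm_mul_iff.mp heq
    rw [hnp] at hsmul
    have hne : ((‖c (1,0,0)‖ : ℝ) : ℂ) ≠ 0 := by
      simp only [ne_eq, Complex.ofReal_eq_zero, norm_eq_zero]
      intro h0
      rw [h0] at n100
      norm_num at n100
    exact ⟨smul_right_injective _ hne hsmul, norm_eq_zero.mp hp'⟩
  obtain ⟨c010, c011⟩ := hsat _ (0,1,1) hip2 A3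
  obtain ⟨c001, c000⟩ := hsat _ (0,0,0) hip1 (by rw [add_comm] at A2; exact A2)
  have huu : (inner ℂ (c (1,0,0)) (c (1,0,0))) = (1/3 : ℂ) := by
    rw [← hσc, hself, show (1/3 : ℂ) = ((1/3 : ℝ) : ℂ) by norm_num]
    exact_mod_cast n100
  have key : ∀ p, (wVec p = (((Real.sqrt 3)⁻¹ : ℝ) : ℂ) ∧ c p = c (1,0,0)) ∨
      (wVec p = 0 ∧ c p = 0) := by
    rintro ⟨a, b, d⟩
    fin_cases a <;> fin_cases b <;> fin_cases d
    · exact Or.inr ⟨by simp [wVec] <;> decide, c000⟩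
    · exact Or.inl ⟨by simp [wVec] <;> decide, c001⟩
    · exact Or.inl ⟨by simp [wVec] <;> decide, c010⟩
    · exact Or.inr ⟨by simp [wVec] <;> decide, c011⟩
    · exact Or.inl ⟨by simp [wVec] <;> decide, rfl⟩
    · exact Or.inr ⟨by simp [wVec] <;> decide, c101⟩
    · exact Or.inr ⟨by simp [wVec] <;> decide, c110⟩
    · exact Or.inr ⟨by simp [wVec] <;> decide, c111⟩
  ext p q
  rw [hσc]
  show (inner ℂ (c p) (c q) : ℂ) = wVec p * (starRingEnd ℂ) (wVec q)
  rcases key p with ⟨hp1, hp2⟩ | ⟨hp1, hp2⟩ <;> rcases key q with ⟨hq1, hq2⟩ | ⟨hq1, hq2⟩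
  · rw [hp1, hq1, hp2, hq2, huu, Complex.conj_ofReal, sq3]
  · rw [hp2, hq2, hq1, inner_zero_right, map_zero, mul_zero]
  · rw [hp2, hp1, inner_zero_left, zero_mul]
  · rw [hp2, hq2, inner_zero_right, hq1, map_zero, mul_zero]


end
end

section
/- Let n ≥ 1 and let ρ be a density matrix indexed by Fin n × Fin n. If there exists a density matrix σ indexed by Fin n × Fin n × Fin n × Fin n with Tr₂₄ σ = ρ, Tr₂₃ σ = ρ, Tr₁₄ σ = ρ and Tr₁₃ σ = ρ, then for all quantum channels Φ₁¹, Φ₂¹, Φ₁², Φ₂² : Matrix (Fin n) (Fin n) ℂ → Matrix (Fin n) (Fin n) ℂ there exists a density matrix σ̃ indexed by Fin n × Fin n × Fin n × Fin n with Tr₂₄ σ̃ = (Φ₁¹ ⊗ Φ₁²)(ρ), Tr₂₃ σ̃ = (Φ₁¹ ⊗ Φ₂²)(ρ), Tr₁₄ σ̃ = (Φ₂¹ ⊗ Φ₁²)(ρ) and Tr₁₃ σ̃ = (Φ₂¹ ⊗ Φ₂²)(ρ). (Thus a bipartite biconditional state can be Bell nonlocal only if the one built from four identity channels is Bell nonlocal.)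 -/
open Matrix BigOperators
open scoped ComplexOrder

noncomputable section

/-- Trace out factors 2 and 4 of a 4-partite matrix. -/
def tr24 {α β γ δ : Type*} [Fintype β] [Fintype δ]
    (M : Matrix (α × β × γ × δ) (α × β × γ × δ) ℂ) : Matrix (α × γ) (α × γ) ℂ :=
  fun p q => ∑ b, ∑ d, M (p.1, b, p.2, d) (q.1, b, q.2, d)

/-- Trace out factors 2 and 3 of a 4-partite matrix. -/
def tr23 {α β γ δ : Type*} [Fintype β] [Fintype γ]
    (M : Matrix (α × β × γ × δ) (α × β × γ × δ) ℂ) : Matrix (α × δ) (α × δ) ℂ :=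
  fun p q => ∑ b, ∑ c, M (p.1, b, c, p.2) (q.1, b, c, q.2)

/-- Trace out factors 1 and 4 of a 4-partite matrix. -/
def tr14 {α β γ δ : Type*} [Fintype α] [Fintype δ]
    (M : Matrix (α × β × γ × δ) (α × β × γ × δ) ℂ) : Matrix (β × γ) (β × γ) ℂ :=
  fun p q => ∑ a, ∑ d, M (a, p.1, p.2, d) (a, q.1, q.2, d)

/-- Trace out factors 1 and 3 of a 4-partite matrix. -/
def tr13 {α β γ δ : Type*} [Fintype α] [Fintype γ]
    (M : Matrix (α × β × γ × δ) (α × β × γ × δ) ℂ) : Matrix (β × δ) (β × δ) ℂ :=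
  fun p q => ∑ a, ∑ c, M (a, p.1, c, p.2) (a, q.1, c, q.2)


private lemma sum4_comm' {a b c d M : Type*} [Fintype a] [Fintype b] [Fintype c] [Fintype d]
    [AddCommMonoid M] (f : a → b → c → d → M) :
    ∑ x, ∑ y, ∑ z, ∑ w, f x y z w = ∑ z, ∑ w, ∑ x, ∑ y, f x y z w := by
  have h1 : ∀ (g : b → c → d → M), ∑ y, ∑ z, ∑ w, g y z w = ∑ z, ∑ w, ∑ y, g y z w := by
    intro g
    rw [Finset.sum_comm]
    exact Finset.sum_congr rfl fun z _ => Finset.sum_comm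
  calc ∑ x, ∑ y, ∑ z, ∑ w, f x y z w
      = ∑ x, ∑ z, ∑ w, ∑ y, f x y z w := Finset.sum_congr rfl fun x _ => h1 _
    _ = ∑ z, ∑ x, ∑ w, ∑ y, f x y z w := Finset.sum_comm
    _ = ∑ z, ∑ w, ∑ x, ∑ y, f x y z w := Finset.sum_congr rfl fun z _ => Finset.sum_comm

private lemma sum3_comm' {a b c M : Type*} [Fintype a] [Fintype b] [Fintype c]
    [AddCommMonoid M] (f : a → b → c → M) :
    ∑ x, ∑ y, ∑ z, f x y z = ∑ y, ∑ z, ∑ x, f x y z := by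
  rw [Finset.sum_comm]
  exact Finset.sum_congr rfl fun y _ => Finset.sum_comm

private lemma psd_contract {ι κ : Type*} [Fintype ι] [Fintype κ]
    (σ : Matrix ι ι ℂ) (K : Matrix (κ × ι) (κ × ι) ℂ)
    (hσ : σ.PosSemidef) (hK : K.PosSemidef) :
    Matrix.PosSemidef (Matrix.of fun P Q : κ => ∑ R, ∑ S, σ R S * K (P, R) (Q, S)) := by
  obtain ⟨A, hA⟩ : ∃ A : Matrix ι ι ℂ, σ = Aᴴ * A := by
    classical
    open MatrixOrder in exact CStarAlgebra.nonneg_iff_eq_star_mul_self.mp hσ.nonneg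
  obtain ⟨B, hB⟩ : ∃ B : Matrix (κ × ι) (κ × ι) ℂ, K = Bᴴ * B := by
    classical
    open MatrixOrder in exact CStarAlgebra.nonneg_iff_eq_star_mul_self.mp hK.nonneg
  have key : (Matrix.of fun P Q : κ => ∑ R, ∑ S, σ R S * K (P, R) (Q, S)) =
      (Matrix.of fun (tu : ι × (κ × ι)) (Q : κ) =>
        ∑ S, A tu.1 S * B tu.2 (Q, S))ᴴ *
      (Matrix.of fun (tu : ι × (κ × ι)) (Q : κ) =>
        ∑ S, A tu.1 S * B tu.2 (Q, S)) := by
    ext P Q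
    simp only [Matrix.mul_apply, Matrix.conjTranspose_apply, Matrix.of_apply, hA, hB,
      star_sum, star_mul']
    calc ∑ R, ∑ S, (∑ t, star (A t R) * A t S) * ∑ u, star (B u (P, R)) * B u (Q, S)
        = ∑ R, ∑ S, ∑ t, ∑ u, (star (A t R) * A t S) * (star (B u (P, R)) * B u (Q, S)) := by
          refine Finset.sum_congr rfl fun R _ => Finset.sum_congr rfl fun S _ => ?_
          rw [Finset.sum_mul_sum]
      _ = ∑ t, ∑ u, ∑ R, ∑ S, (star (A t R) * A t S) * (star (B u (P, R)) * B u (Q, S)) :=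
          sum4_comm' _
      _ = ∑ tu : ι × (κ × ι), (∑ R, star (A tu.1 R) * star (B tu.2 (P, R))) *
            ∑ S, A tu.1 S * B tu.2 (Q, S) := by
          rw [Fintype.sum_prod_type]
          refine Finset.sum_congr rfl fun t _ => Finset.sum_congr rfl fun u _ => ?_
          rw [Finset.sum_mul_sum]
          refine Finset.sum_congr rfl fun R _ => Finset.sum_congr rfl fun S _ => ?_
          ring
  rw [key]
  exact Matrix.posSemidef_conjTranspose_mul_self _

private lemma psd_kron {a b : Type*} [Fintype a] [Fintype b]
    (M : Matrix a a ℂ) (N : Matrix b b ℂ) (hM : M.PosSemidef) (hN : N.PosSemidef) :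
    Matrix.PosSemidef (Matrix.of fun p q : a × b => M p.1 q.1 * N p.2 q.2) := by
  obtain ⟨A, hA⟩ : ∃ A : Matrix a a ℂ, M = Aᴴ * A := by
    classical
    open MatrixOrder in exact CStarAlgebra.nonneg_iff_eq_star_mul_self.mp hM.nonneg
  obtain ⟨B, hB⟩ : ∃ B : Matrix b b ℂ, N = Bᴴ * B := by
    classical
    open MatrixOrder in exact CStarAlgebra.nonneg_iff_eq_star_mul_self.mp hN.nonneg
  have key : (Matrix.of fun p q : a × b => M p.1 q.1 * N p.2 q.2) =
      (Matrix.of fun (tu : a × b) (q : a × b) => A tu.1 q.1 * B tu.2 q.2)ᴴ *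
      (Matrix.of fun (tu : a × b) (q : a × b) => A tu.1 q.1 * B tu.2 q.2) := by
    ext p q
    simp only [Matrix.mul_apply, Matrix.conjTranspose_apply, Matrix.of_apply, hA, hB,
      star_mul', Fintype.sum_prod_type]
    rw [Finset.sum_mul_sum]
    refine Finset.sum_congr rfl fun t _ => Finset.sum_congr rfl fun u _ => ?_
    ring
  rw [key]
  exact Matrix.posSemidef_conjTranspose_mul_self _

private lemma diag_sum' {ι κ : Type*} [Fintype ι] [DecidableEq ι] [Fintype κ]
    (Φ : Matrix ι ι ℂ →ₗ[ℂ] Matrix κ κ ℂ) (h : ∀ X, (Φ X).trace = X.trace) (i j : ι) :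
    ∑ b, Φ (Matrix.single i j 1) b b = if i = j then 1 else 0 := by
  have h2 := h (Matrix.single i j 1)
  rw [Matrix.trace] at h2
  simp only [Matrix.diag] at h2
  rw [h2]
  by_cases hij : i = j
  · subst hij; simp [Matrix.trace_single_eq_same]
  · simp [hij, Matrix.trace_single_eq_of_ne _ _ _ hij]

private lemma pull2' {n : ℕ} (c A B : ℂ) (g h : Fin n → ℂ) :
    ∑ x, ∑ y, c * (A * (g x * (B * h y))) =
      c * (A * ((∑ x, g x) * (B * ∑ y, h y))) := by
  simp only [Finset.mul_sum, Finset.sum_mul]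
  rw [Finset.sum_comm]

private lemma pull2b' {n : ℕ} (c A B : ℂ) (g h : Fin n → ℂ) :
    ∑ x, ∑ y, c * (A * (g x * (h y * B))) =
      c * (A * ((∑ x, g x) * ((∑ y, h y) * B))) := by
  simp only [Finset.mul_sum, Finset.sum_mul]
  rw [Finset.sum_comm]

private lemma pull2c' {n : ℕ} (c A B : ℂ) (g h : Fin n → ℂ) :
    ∑ x, ∑ y, c * (g x * (A * (B * h y))) =
      c * ((∑ x, g x) * (A * (B * ∑ y, h y))) := by
  simp only [Finset.mul_sum, Finset.sum_mul]
  rw [Finset.sum_comm]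

private lemma pull2d' {n : ℕ} (c A B : ℂ) (g h : Fin n → ℂ) :
    ∑ x, ∑ y, c * (g x * (A * (h y * B))) =
      c * ((∑ x, g x) * (A * ((∑ y, h y) * B))) := by
  simp only [Finset.mul_sum, Finset.sum_mul]
  rw [Finset.sum_comm]

private abbrev I4' (n : ℕ) := Fin n × Fin n × Fin n × Fin n
private abbrev T6' (n : ℕ) := Fin n × Fin n × Fin n × Fin n × Fin n × Fin n

private lemma t24key {n : ℕ} (σ : Matrix (I4' n) (I4' n) ℂ) (f g : Fin n → Fin n → ℂ) :
    ∑ R : I4' n, ∑ S : I4' n,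
      σ R S * (f R.1 S.1 * ((if R.2.1 = S.2.1 then (1:ℂ) else 0) *
        (g R.2.2.1 S.2.2.1 * (if R.2.2.2 = S.2.2.2 then (1:ℂ) else 0))))
    = ∑ a, ∑ a', ∑ c, ∑ c', ∑ b, ∑ d,
        σ (a, b, c, d) (a', b, c', d) * (f a a' * g c c') := by
  have e1 : ∑ R : I4' n, ∑ S : I4' n,
      σ R S * (f R.1 S.1 * ((if R.2.1 = S.2.1 then (1:ℂ) else 0) *
        (g R.2.2.1 S.2.2.1 * (if R.2.2.2 = S.2.2.2 then (1:ℂ) else 0))))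
      = ∑ z : T6' n, σ (z.1, z.2.1, z.2.2.1, z.2.2.2.1)
          (z.2.2.2.2.1, z.2.1, z.2.2.2.2.2, z.2.2.2.1) *
          (f z.1 z.2.2.2.2.1 * g z.2.2.1 z.2.2.2.2.2) := by
    simp only [Fintype.sum_prod_type, mul_ite, ite_mul, mul_one, mul_zero, zero_mul, one_mul,
      Finset.sum_ite_irrel, Finset.sum_const_zero, Finset.sum_ite_eq, Finset.sum_ite_eq',
      Finset.mem_univ, if_true]
  have e2 : (∑ a, ∑ a', ∑ c, ∑ c', ∑ b, ∑ d,
        σ (a, b, c, d) (a', b, c', d) * (f a a' * g c c') : ℂ)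
      = ∑ z : T6' n, σ (z.1, z.2.2.2.2.1, z.2.2.1, z.2.2.2.2.2)
          (z.2.1, z.2.2.2.2.1, z.2.2.2.1, z.2.2.2.2.2) *
          (f z.1 z.2.1 * g z.2.2.1 z.2.2.2.1) := by
    simp only [Fintype.sum_prod_type]
  rw [e1, e2]
  exact Fintype.sum_equiv ⟨fun z => (z.1, z.2.2.2.2.1, z.2.2.1, z.2.2.2.2.2, z.2.1, z.2.2.2.1),
    fun z => (z.1, z.2.2.2.2.1, z.2.2.1, z.2.2.2.2.2, z.2.1, z.2.2.2.1),
    fun z => rfl, fun z => rfl⟩ _ _ (fun z => rfl)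

private lemma pullP' {α β : Type*} [Fintype α] [Fintype β] (g : α → ℂ) (h : β → ℂ) :
    ∑ p : α × β, g p.1 * h p.2 = (∑ x, g x) * (∑ y, h y) := by
  rw [Fintype.sum_mul_sum]
  exact Fintype.sum_prod_type _

private lemma prodsplit4 {n : ℕ} (g1 g2 g3 g4 : Fin n → ℂ) :
    ∑ P : I4' n, g1 P.1 * (g2 P.2.1 * (g3 P.2.2.1 * g4 P.2.2.2)) =
      (∑ x, g1 x) * ((∑ x, g2 x) * ((∑ x, g3 x) * (∑ x, g4 x))) := by
  rw [pullP' g1 (fun p : Fin n × Fin n × Fin n => g2 p.1 * (g3 p.2.1 * g4 p.2.2)),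
    pullP' g2 (fun p : Fin n × Fin n => g3 p.1 * g4 p.2), pullP' g3 g4]

private lemma trkey {n : ℕ} (σ : Matrix (I4' n) (I4' n) ℂ) :
    ∑ R : I4' n, ∑ S : I4' n,
      σ R S * ((if R.1 = S.1 then (1:ℂ) else 0) * ((if R.2.1 = S.2.1 then (1:ℂ) else 0) *
        ((if R.2.2.1 = S.2.2.1 then (1:ℂ) else 0) * (if R.2.2.2 = S.2.2.2 then (1:ℂ) else 0))))
    = ∑ R : I4' n, σ R R := by
  simp only [Fintype.sum_prod_type, mul_ite, ite_mul, mul_one, mul_zero, zero_mul, one_mul,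
    Finset.sum_ite_irrel, Finset.sum_const_zero, Finset.sum_ite_eq, Finset.sum_ite_eq',
    Finset.mem_univ, if_true]

private lemma t23key {n : ℕ} (σ : Matrix (I4' n) (I4' n) ℂ) (f g : Fin n → Fin n → ℂ) :
    ∑ R : I4' n, ∑ S : I4' n,
      σ R S * (f R.1 S.1 * ((if R.2.1 = S.2.1 then (1:ℂ) else 0) *
        ((if R.2.2.1 = S.2.2.1 then (1:ℂ) else 0) * g R.2.2.2 S.2.2.2)))
    = ∑ a, ∑ a', ∑ d, ∑ d', ∑ b, ∑ c,
        σ (a, b, c, d) (a', b, c, d') * (f a a' * g d d') := by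
  have e1 : ∑ R : I4' n, ∑ S : I4' n,
      σ R S * (f R.1 S.1 * ((if R.2.1 = S.2.1 then (1:ℂ) else 0) *
        ((if R.2.2.1 = S.2.2.1 then (1:ℂ) else 0) * g R.2.2.2 S.2.2.2)))
      = ∑ z : T6' n, σ (z.1, z.2.1, z.2.2.1, z.2.2.2.1)
          (z.2.2.2.2.1, z.2.1, z.2.2.1, z.2.2.2.2.2) *
          (f z.1 z.2.2.2.2.1 * g z.2.2.2.1 z.2.2.2.2.2) := by
    simp only [Fintype.sum_prod_type, mul_ite, ite_mul, mul_one, mul_zero, zero_mul, one_mul,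
      Finset.sum_ite_irrel, Finset.sum_const_zero, Finset.sum_ite_eq, Finset.sum_ite_eq',
      Finset.mem_univ, if_true]
  have e2 : (∑ a, ∑ a', ∑ d, ∑ d', ∑ b, ∑ c,
        σ (a, b, c, d) (a', b, c, d') * (f a a' * g d d') : ℂ)
      = ∑ z : T6' n, σ (z.1, z.2.2.2.2.1, z.2.2.2.2.2, z.2.2.1)
          (z.2.1, z.2.2.2.2.1, z.2.2.2.2.2, z.2.2.2.1) *
          (f z.1 z.2.1 * g z.2.2.1 z.2.2.2.1) := by
    simp only [Fintype.sum_prod_type]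
  rw [e1, e2]
  exact Fintype.sum_equiv
    ⟨fun z => (z.1, z.2.2.2.2.1, z.2.2.2.1, z.2.2.2.2.2, z.2.1, z.2.2.1),
     fun z => (z.1, z.2.2.2.2.1, z.2.2.2.2.2, z.2.2.1, z.2.1, z.2.2.2.1),
     fun z => rfl, fun z => rfl⟩ _ _ (fun z => rfl)

private lemma t14key {n : ℕ} (σ : Matrix (I4' n) (I4' n) ℂ) (f g : Fin n → Fin n → ℂ) :
    ∑ R : I4' n, ∑ S : I4' n,
      σ R S * ((if R.1 = S.1 then (1:ℂ) else 0) * (f R.2.1 S.2.1 *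
        (g R.2.2.1 S.2.2.1 * (if R.2.2.2 = S.2.2.2 then (1:ℂ) else 0))))
    = ∑ b, ∑ b', ∑ c, ∑ c', ∑ a, ∑ d,
        σ (a, b, c, d) (a, b', c', d) * (f b b' * g c c') := by
  have e1 : ∑ R : I4' n, ∑ S : I4' n,
      σ R S * ((if R.1 = S.1 then (1:ℂ) else 0) * (f R.2.1 S.2.1 *
        (g R.2.2.1 S.2.2.1 * (if R.2.2.2 = S.2.2.2 then (1:ℂ) else 0))))
      = ∑ z : T6' n, σ (z.1, z.2.1, z.2.2.1, z.2.2.2.1)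
          (z.1, z.2.2.2.2.1, z.2.2.2.2.2, z.2.2.2.1) *
          (f z.2.1 z.2.2.2.2.1 * g z.2.2.1 z.2.2.2.2.2) := by
    simp only [Fintype.sum_prod_type, mul_ite, ite_mul, mul_one, mul_zero, zero_mul, one_mul,
      Finset.sum_ite_irrel, Finset.sum_const_zero, Finset.sum_ite_eq, Finset.sum_ite_eq',
      Finset.mem_univ, if_true]
  have e2 : (∑ b, ∑ b', ∑ c, ∑ c', ∑ a, ∑ d,
        σ (a, b, c, d) (a, b', c', d) * (f b b' * g c c') : ℂ)
      = ∑ z : T6' n, σ (z.2.2.2.2.1, z.1, z.2.2.1, z.2.2.2.2.2)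
          (z.2.2.2.2.1, z.2.1, z.2.2.2.1, z.2.2.2.2.2) *
          (f z.1 z.2.1 * g z.2.2.1 z.2.2.2.1) := by
    simp only [Fintype.sum_prod_type]
  rw [e1, e2]
  exact Fintype.sum_equiv
    ⟨fun z => (z.2.1, z.2.2.2.2.1, z.2.2.1, z.2.2.2.2.2, z.1, z.2.2.2.1),
     fun z => (z.2.2.2.2.1, z.1, z.2.2.1, z.2.2.2.2.2, z.2.1, z.2.2.2.1),
     fun z => rfl, fun z => rfl⟩ _ _ (fun z => rfl)

private lemma t13key {n : ℕ} (σ : Matrix (I4' n) (I4' n) ℂ) (f g : Fin n → Fin n → ℂ) :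
    ∑ R : I4' n, ∑ S : I4' n,
      σ R S * ((if R.1 = S.1 then (1:ℂ) else 0) * (f R.2.1 S.2.1 *
        ((if R.2.2.1 = S.2.2.1 then (1:ℂ) else 0) * g R.2.2.2 S.2.2.2)))
    = ∑ b, ∑ b', ∑ d, ∑ d', ∑ a, ∑ c,
        σ (a, b, c, d) (a, b', c, d') * (f b b' * g d d') := by
  have e1 : ∑ R : I4' n, ∑ S : I4' n,
      σ R S * ((if R.1 = S.1 then (1:ℂ) else 0) * (f R.2.1 S.2.1 *
        ((if R.2.2.1 = S.2.2.1 then (1:ℂ) else 0) * g R.2.2.2 S.2.2.2)))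
      = ∑ z : T6' n, σ (z.1, z.2.1, z.2.2.1, z.2.2.2.1)
          (z.1, z.2.2.2.2.1, z.2.2.1, z.2.2.2.2.2) *
          (f z.2.1 z.2.2.2.2.1 * g z.2.2.2.1 z.2.2.2.2.2) := by
    simp only [Fintype.sum_prod_type, mul_ite, ite_mul, mul_one, mul_zero, zero_mul, one_mul,
      Finset.sum_ite_irrel, Finset.sum_const_zero, Finset.sum_ite_eq, Finset.sum_ite_eq',
      Finset.mem_univ, if_true]
  have e2 : (∑ b, ∑ b', ∑ d, ∑ d', ∑ a, ∑ c,
        σ (a, b, c, d) (a, b', c, d') * (f b b' * g d d') : ℂ)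
      = ∑ z : T6' n, σ (z.2.2.2.2.1, z.1, z.2.2.2.2.2, z.2.2.1)
          (z.2.2.2.2.1, z.2.1, z.2.2.2.2.2, z.2.2.2.1) *
          (f z.1 z.2.1 * g z.2.2.1 z.2.2.2.1) := by
    simp only [Fintype.sum_prod_type]
  rw [e1, e2]
  exact Fintype.sum_equiv
    ⟨fun z => (z.2.1, z.2.2.2.2.1, z.2.2.2.1, z.2.2.2.2.2, z.1, z.2.2.1),
     fun z => (z.2.2.2.2.1, z.1, z.2.2.2.2.2, z.2.2.1, z.2.1, z.2.2.2.1),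
     fun z => rfl, fun z => rfl⟩ _ _ (fun z => rfl)



set_option maxHeartbeats 2000000 in
/-- if the bipartite biconditional state built from four identity channels is
Bell local, then the one built from any four quantum channels is Bell local. -/
theorem bell_local_of_id {n : ℕ} (hn : 1 ≤ n)
    (ρ : Matrix (Fin n × Fin n) (Fin n × Fin n) ℂ) (hρ : IsDensity ρ)
    (σ : Matrix (Fin n × Fin n × Fin n × Fin n) (Fin n × Fin n × Fin n × Fin n) ℂ)
    (hσ : IsDensity σ)
    (h24 : tr24 σ = ρ) (h23 : tr23 σ = ρ) (h14 : tr14 σ = ρ) (h13 : tr13 σ = ρ)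
    (Φ₁₁ Φ₂₁ Φ₁₂ Φ₂₂ : Matrix (Fin n) (Fin n) ℂ →ₗ[ℂ] Matrix (Fin n) (Fin n) ℂ)
    (hΦ₁₁ : IsQChannel Φ₁₁) (hΦ₂₁ : IsQChannel Φ₂₁)
    (hΦ₁₂ : IsQChannel Φ₁₂) (hΦ₂₂ : IsQChannel Φ₂₂) :
    ∃ σ' : Matrix (Fin n × Fin n × Fin n × Fin n) (Fin n × Fin n × Fin n × Fin n) ℂ,
      IsDensity σ' ∧
      tr24 σ' = tmap (⇑Φ₁₁) (⇑Φ₁₂) ρ ∧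
      tr23 σ' = tmap (⇑Φ₁₁) (⇑Φ₂₂) ρ ∧
      tr14 σ' = tmap (⇑Φ₂₁) (⇑Φ₁₂) ρ ∧
      tr13 σ' = tmap (⇑Φ₂₁) (⇑Φ₂₂) ρ := by
  classical
  set L : Matrix ((Fin n × Fin n) × (Fin n × Fin n) × (Fin n × Fin n) × (Fin n × Fin n))
      ((Fin n × Fin n) × (Fin n × Fin n) × (Fin n × Fin n) × (Fin n × Fin n)) ℂ :=
    Matrix.of fun p q => choi Φ₁₁ p.1 q.1 *
      (Matrix.of fun p q => choi Φ₂₁ p.1 q.1 *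
        (Matrix.of fun p q => choi Φ₁₂ p.1 q.1 * choi Φ₂₂ p.2 q.2) p.2 q.2) p.2 q.2
    with hLdef
  have hL : L.PosSemidef :=
    psd_kron _ _ hΦ₁₁.2 (psd_kron _ _ hΦ₂₁.2 (psd_kron _ _ hΦ₁₂.2 hΦ₂₂.2))
  set e : (I4' n × I4' n) →
      (Fin n × Fin n) × (Fin n × Fin n) × (Fin n × Fin n) × (Fin n × Fin n) := fun x =>
    ((x.1.1, x.2.1), (x.1.2.1, x.2.2.1), (x.1.2.2.1, x.2.2.2.1), (x.1.2.2.2, x.2.2.2.2))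
    with hedef
  set K : Matrix (I4' n × I4' n) (I4' n × I4' n) ℂ := L.submatrix e e with hKdef
  have hK : K.PosSemidef := hL.submatrix e
  set σ' : Matrix (I4' n) (I4' n) ℂ :=
    Matrix.of fun P Q => ∑ R, ∑ S, σ R S * K (P, R) (Q, S) with hσ'def
  have hpsd : σ'.PosSemidef := psd_contract σ K hσ.1 hK
  have entry : ∀ P Q : I4' n, σ' P Q = ∑ R : I4' n, ∑ S : I4' n, σ R S *
      (Φ₁₁ (Matrix.single R.1 S.1 1) P.1 Q.1 *
        (Φ₂₁ (Matrix.single R.2.1 S.2.1 1) P.2.1 Q.2.1 *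
          (Φ₁₂ (Matrix.single R.2.2.1 S.2.2.1 1) P.2.2.1 Q.2.2.1 *
            Φ₂₂ (Matrix.single R.2.2.2 S.2.2.2 1) P.2.2.2 Q.2.2.2))) :=
    fun P Q => rfl
  refine ⟨σ', ⟨hpsd, ?_⟩, ?_, ?_, ?_, ?_⟩
  · -- trace
    have htr : σ'.trace = ∑ P : I4' n, σ' P P := rfl
    rw [htr]
    calc ∑ P : I4' n, σ' P P
        = ∑ P : I4' n, ∑ R : I4' n, ∑ S : I4' n, σ R S *
            (Φ₁₁ (Matrix.single R.1 S.1 1) P.1 P.1 *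
              (Φ₂₁ (Matrix.single R.2.1 S.2.1 1) P.2.1 P.2.1 *
                (Φ₁₂ (Matrix.single R.2.2.1 S.2.2.1 1) P.2.2.1 P.2.2.1 *
                  Φ₂₂ (Matrix.single R.2.2.2 S.2.2.2 1) P.2.2.2 P.2.2.2))) :=
          Finset.sum_congr rfl fun P _ => entry P P
      _ = ∑ R : I4' n, ∑ S : I4' n, ∑ P : I4' n, σ R S *
            (Φ₁₁ (Matrix.single R.1 S.1 1) P.1 P.1 *
              (Φ₂₁ (Matrix.single R.2.1 S.2.1 1) P.2.1 P.2.1 *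
                (Φ₁₂ (Matrix.single R.2.2.1 S.2.2.1 1) P.2.2.1 P.2.2.1 *
                  Φ₂₂ (Matrix.single R.2.2.2 S.2.2.2 1) P.2.2.2 P.2.2.2))) :=
          sum3_comm' _
      _ = ∑ R : I4' n, ∑ S : I4' n,
            σ R S * ((if R.1 = S.1 then (1:ℂ) else 0) * ((if R.2.1 = S.2.1 then (1:ℂ) else 0) *
              ((if R.2.2.1 = S.2.2.1 then (1:ℂ) else 0) *
                (if R.2.2.2 = S.2.2.2 then (1:ℂ) else 0)))) := by
          refine Finset.sum_congr rfl fun R _ => Finset.sum_congr rfl fun S _ => ?_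
          rw [← Finset.mul_sum,
            prodsplit4 (fun x => Φ₁₁ (Matrix.single R.1 S.1 1) x x)
              (fun x => Φ₂₁ (Matrix.single R.2.1 S.2.1 1) x x)
              (fun x => Φ₁₂ (Matrix.single R.2.2.1 S.2.2.1 1) x x)
              (fun x => Φ₂₂ (Matrix.single R.2.2.2 S.2.2.2 1) x x),
            diag_sum' Φ₁₁ hΦ₁₁.1, diag_sum' Φ₂₁ hΦ₂₁.1,
            diag_sum' Φ₁₂ hΦ₁₂.1, diag_sum' Φ₂₂ hΦ₂₂.1]
      _ = ∑ R : I4' n, σ R R := trkey σ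
      _ = 1 := hσ.2
  · -- tr24
    refine Matrix.ext fun p q => ?_
    show ∑ b, ∑ d, σ' (p.1, b, p.2, d) (q.1, b, q.2, d) = _
    calc ∑ b, ∑ d, σ' (p.1, b, p.2, d) (q.1, b, q.2, d)
        = ∑ b, ∑ d, ∑ R : I4' n, ∑ S : I4' n, σ R S *
            (Φ₁₁ (Matrix.single R.1 S.1 1) p.1 q.1 *
              (Φ₂₁ (Matrix.single R.2.1 S.2.1 1) b b *
                (Φ₁₂ (Matrix.single R.2.2.1 S.2.2.1 1) p.2 q.2 *
                  Φ₂₂ (Matrix.single R.2.2.2 S.2.2.2 1) d d))) :=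
          Finset.sum_congr rfl fun b _ => Finset.sum_congr rfl fun d _ => entry _ _
      _ = ∑ R : I4' n, ∑ S : I4' n, ∑ b, ∑ d, σ R S *
            (Φ₁₁ (Matrix.single R.1 S.1 1) p.1 q.1 *
              (Φ₂₁ (Matrix.single R.2.1 S.2.1 1) b b *
                (Φ₁₂ (Matrix.single R.2.2.1 S.2.2.1 1) p.2 q.2 *
                  Φ₂₂ (Matrix.single R.2.2.2 S.2.2.2 1) d d))) := sum4_comm' _
      _ = ∑ R : I4' n, ∑ S : I4' n, σ R S *
            (Φ₁₁ (Matrix.single R.1 S.1 1) p.1 q.1 *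
              ((if R.2.1 = S.2.1 then (1:ℂ) else 0) *
                (Φ₁₂ (Matrix.single R.2.2.1 S.2.2.1 1) p.2 q.2 *
                  (if R.2.2.2 = S.2.2.2 then (1:ℂ) else 0)))) := by
          refine Finset.sum_congr rfl fun R _ => Finset.sum_congr rfl fun S _ => ?_
          rw [pull2' (σ R S) (Φ₁₁ (Matrix.single R.1 S.1 1) p.1 q.1)
              (Φ₁₂ (Matrix.single R.2.2.1 S.2.2.1 1) p.2 q.2)
              (fun x => Φ₂₁ (Matrix.single R.2.1 S.2.1 1) x x)
              (fun x => Φ₂₂ (Matrix.single R.2.2.2 S.2.2.2 1) x x),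
            diag_sum' Φ₂₁ hΦ₂₁.1, diag_sum' Φ₂₂ hΦ₂₂.1]
      _ = ∑ a, ∑ a', ∑ c, ∑ c', ∑ b, ∑ d, σ (a, b, c, d) (a', b, c', d) *
            (Φ₁₁ (Matrix.single a a' 1) p.1 q.1 *
              Φ₁₂ (Matrix.single c c' 1) p.2 q.2) := t24key σ (fun i j => Φ₁₁ (Matrix.single i j 1) p.1 q.1)
            (fun i j => Φ₁₂ (Matrix.single i j 1) p.2 q.2)
      _ = tmap (⇑Φ₁₁) (⇑Φ₁₂) ρ p q := by
          rw [← h24]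
          simp only [tmap, tr24, Finset.sum_mul]
  · -- tr23
    refine Matrix.ext fun p q => ?_
    show ∑ b, ∑ c, σ' (p.1, b, c, p.2) (q.1, b, c, q.2) = _
    calc ∑ b, ∑ c, σ' (p.1, b, c, p.2) (q.1, b, c, q.2)
        = ∑ b, ∑ c, ∑ R : I4' n, ∑ S : I4' n, σ R S *
            (Φ₁₁ (Matrix.single R.1 S.1 1) p.1 q.1 *
              (Φ₂₁ (Matrix.single R.2.1 S.2.1 1) b b *
                (Φ₁₂ (Matrix.single R.2.2.1 S.2.2.1 1) c c *
                  Φ₂₂ (Matrix.single R.2.2.2 S.2.2.2 1) p.2 q.2))) :=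
          Finset.sum_congr rfl fun b _ => Finset.sum_congr rfl fun c _ => entry _ _
      _ = ∑ R : I4' n, ∑ S : I4' n, ∑ b, ∑ c, σ R S *
            (Φ₁₁ (Matrix.single R.1 S.1 1) p.1 q.1 *
              (Φ₂₁ (Matrix.single R.2.1 S.2.1 1) b b *
                (Φ₁₂ (Matrix.single R.2.2.1 S.2.2.1 1) c c *
                  Φ₂₂ (Matrix.single R.2.2.2 S.2.2.2 1) p.2 q.2))) := sum4_comm' _
      _ = ∑ R : I4' n, ∑ S : I4' n, σ R S *
            (Φ₁₁ (Matrix.single R.1 S.1 1) p.1 q.1 *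
              ((if R.2.1 = S.2.1 then (1:ℂ) else 0) *
                ((if R.2.2.1 = S.2.2.1 then (1:ℂ) else 0) *
                  Φ₂₂ (Matrix.single R.2.2.2 S.2.2.2 1) p.2 q.2))) := by
          refine Finset.sum_congr rfl fun R _ => Finset.sum_congr rfl fun S _ => ?_
          rw [pull2b' (σ R S) (Φ₁₁ (Matrix.single R.1 S.1 1) p.1 q.1)
              (Φ₂₂ (Matrix.single R.2.2.2 S.2.2.2 1) p.2 q.2)
              (fun x => Φ₂₁ (Matrix.single R.2.1 S.2.1 1) x x)
              (fun x => Φ₁₂ (Matrix.single R.2.2.1 S.2.2.1 1) x x),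
            diag_sum' Φ₂₁ hΦ₂₁.1, diag_sum' Φ₁₂ hΦ₁₂.1]
      _ = ∑ a, ∑ a', ∑ d, ∑ d', ∑ b, ∑ c, σ (a, b, c, d) (a', b, c, d') *
            (Φ₁₁ (Matrix.single a a' 1) p.1 q.1 *
              Φ₂₂ (Matrix.single d d' 1) p.2 q.2) := t23key σ (fun i j => Φ₁₁ (Matrix.single i j 1) p.1 q.1)
            (fun i j => Φ₂₂ (Matrix.single i j 1) p.2 q.2)
      _ = tmap (⇑Φ₁₁) (⇑Φ₂₂) ρ p q := by
          rw [← h23]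
          simp only [tmap, tr23, Finset.sum_mul]
  · -- tr14
    refine Matrix.ext fun p q => ?_
    show ∑ a, ∑ d, σ' (a, p.1, p.2, d) (a, q.1, q.2, d) = _
    calc ∑ a, ∑ d, σ' (a, p.1, p.2, d) (a, q.1, q.2, d)
        = ∑ a, ∑ d, ∑ R : I4' n, ∑ S : I4' n, σ R S *
            (Φ₁₁ (Matrix.single R.1 S.1 1) a a *
              (Φ₂₁ (Matrix.single R.2.1 S.2.1 1) p.1 q.1 *
                (Φ₁₂ (Matrix.single R.2.2.1 S.2.2.1 1) p.2 q.2 *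
                  Φ₂₂ (Matrix.single R.2.2.2 S.2.2.2 1) d d))) :=
          Finset.sum_congr rfl fun a _ => Finset.sum_congr rfl fun d _ => entry _ _
      _ = ∑ R : I4' n, ∑ S : I4' n, ∑ a, ∑ d, σ R S *
            (Φ₁₁ (Matrix.single R.1 S.1 1) a a *
              (Φ₂₁ (Matrix.single R.2.1 S.2.1 1) p.1 q.1 *
                (Φ₁₂ (Matrix.single R.2.2.1 S.2.2.1 1) p.2 q.2 *
                  Φ₂₂ (Matrix.single R.2.2.2 S.2.2.2 1) d d))) := sum4_comm' _
      _ = ∑ R : I4' n, ∑ S : I4' n, σ R S *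
            ((if R.1 = S.1 then (1:ℂ) else 0) *
              (Φ₂₁ (Matrix.single R.2.1 S.2.1 1) p.1 q.1 *
                (Φ₁₂ (Matrix.single R.2.2.1 S.2.2.1 1) p.2 q.2 *
                  (if R.2.2.2 = S.2.2.2 then (1:ℂ) else 0)))) := by
          refine Finset.sum_congr rfl fun R _ => Finset.sum_congr rfl fun S _ => ?_
          rw [pull2c' (σ R S) (Φ₂₁ (Matrix.single R.2.1 S.2.1 1) p.1 q.1)
              (Φ₁₂ (Matrix.single R.2.2.1 S.2.2.1 1) p.2 q.2)
              (fun x => Φ₁₁ (Matrix.single R.1 S.1 1) x x)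
              (fun x => Φ₂₂ (Matrix.single R.2.2.2 S.2.2.2 1) x x),
            diag_sum' Φ₁₁ hΦ₁₁.1, diag_sum' Φ₂₂ hΦ₂₂.1]
      _ = ∑ b, ∑ b', ∑ c, ∑ c', ∑ a, ∑ d, σ (a, b, c, d) (a, b', c', d) *
            (Φ₂₁ (Matrix.single b b' 1) p.1 q.1 *
              Φ₁₂ (Matrix.single c c' 1) p.2 q.2) := t14key σ (fun i j => Φ₂₁ (Matrix.single i j 1) p.1 q.1)
            (fun i j => Φ₁₂ (Matrix.single i j 1) p.2 q.2)
      _ = tmap (⇑Φ₂₁) (⇑Φ₁₂) ρ p q := by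
          rw [← h14]
          simp only [tmap, tr14, Finset.sum_mul]
  · -- tr13
    refine Matrix.ext fun p q => ?_
    show ∑ a, ∑ c, σ' (a, p.1, c, p.2) (a, q.1, c, q.2) = _
    calc ∑ a, ∑ c, σ' (a, p.1, c, p.2) (a, q.1, c, q.2)
        = ∑ a, ∑ c, ∑ R : I4' n, ∑ S : I4' n, σ R S *
            (Φ₁₁ (Matrix.single R.1 S.1 1) a a *
              (Φ₂₁ (Matrix.single R.2.1 S.2.1 1) p.1 q.1 *
                (Φ₁₂ (Matrix.single R.2.2.1 S.2.2.1 1) c c *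
                  Φ₂₂ (Matrix.single R.2.2.2 S.2.2.2 1) p.2 q.2))) :=
          Finset.sum_congr rfl fun a _ => Finset.sum_congr rfl fun c _ => entry _ _
      _ = ∑ R : I4' n, ∑ S : I4' n, ∑ a, ∑ c, σ R S *
            (Φ₁₁ (Matrix.single R.1 S.1 1) a a *
              (Φ₂₁ (Matrix.single R.2.1 S.2.1 1) p.1 q.1 *
                (Φ₁₂ (Matrix.single R.2.2.1 S.2.2.1 1) c c *
                  Φ₂₂ (Matrix.single R.2.2.2 S.2.2.2 1) p.2 q.2))) := sum4_comm' _
      _ = ∑ R : I4' n, ∑ S : I4' n, σ R S *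
            ((if R.1 = S.1 then (1:ℂ) else 0) *
              (Φ₂₁ (Matrix.single R.2.1 S.2.1 1) p.1 q.1 *
                ((if R.2.2.1 = S.2.2.1 then (1:ℂ) else 0) *
                  Φ₂₂ (Matrix.single R.2.2.2 S.2.2.2 1) p.2 q.2))) := by
          refine Finset.sum_congr rfl fun R _ => Finset.sum_congr rfl fun S _ => ?_
          rw [pull2d' (σ R S) (Φ₂₁ (Matrix.single R.2.1 S.2.1 1) p.1 q.1)
              (Φ₂₂ (Matrix.single R.2.2.2 S.2.2.2 1) p.2 q.2)
              (fun x => Φ₁₁ (Matrix.single R.1 S.1 1) x x)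
              (fun x => Φ₁₂ (Matrix.single R.2.2.1 S.2.2.1 1) x x),
            diag_sum' Φ₁₁ hΦ₁₁.1, diag_sum' Φ₁₂ hΦ₁₂.1]
      _ = ∑ b, ∑ b', ∑ d, ∑ d', ∑ a, ∑ c, σ (a, b, c, d) (a, b', c, d') *
            (Φ₂₁ (Matrix.single b b' 1) p.1 q.1 *
              Φ₂₂ (Matrix.single d d' 1) p.2 q.2) := t13key σ (fun i j => Φ₂₁ (Matrix.single i j 1) p.1 q.1)
            (fun i j => Φ₂₂ (Matrix.single i j 1) p.2 q.2)
      _ = tmap (⇑Φ₂₁) (⇑Φ₂₂) ρ p q := by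
          rw [← h13]
          simp only [tmap, tr13, Finset.sum_mul]


end
end

section
/- Let n ≥ 1, let ρ be a density matrix indexed by Fin n × Fin n, let U be an n × n unitary matrix with unitary channel Φ_U(X) = U X U*, and let Φ₂¹, Φ₁², Φ₂² : Matrix (Fin n) (Fin n) ℂ → Matrix (Fin n) (Fin n) ℂ be quantum channels. Then there exists a density matrix σ indexed by Fin n × Fin n × Fin n × Fin n with Tr₂₄ σ = (Φ_U ⊗ Φ₁²)(ρ), Tr₂₃ σ = (Φ_U ⊗ Φ₂²)(ρ), Tr₁₄ σ = (Φ₂¹ ⊗ Φ₁²)(ρ), Tr₁₃ σ = (Φ₂¹ ⊗ Φ₂²)(ρ) if and only if there exists a density matrix σ' with Tr₂₄ σ' = (id ⊗ Φ₁²)(ρ), Tr₂₃ σ' = (id ⊗ Φ₂²)(ρ), Tr₁₄ σ' = (Φ₂¹ ⊗ Φ₁²)(ρ), Tr₁₃ σ' = (Φ₂¹ ⊗ Φ₂²)(ρ). (The bipartite biconditional state with one unitary channel is Bell nonlocal if and only if the one with that channel replaced by the identity is.) -/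
open Matrix BigOperators
open scoped ComplexOrder

noncomputable section

/-! ### Auxiliary lemmas -/

open Kronecker

section SumAux

variable {M : Type*} [AddCommMonoid M]

lemma aux_rot3 {α β γ : Type*} [Fintype α] [Fintype β] [Fintype γ] (f : α → β → γ → M) :
    ∑ a, ∑ b, ∑ c, f a b c = ∑ c, ∑ a, ∑ b, f a b c :=
  (Finset.sum_congr rfl fun _ _ => Finset.sum_comm).trans Finset.sum_comm

lemma aux_rot4 {α β γ δ : Type*} [Fintype α] [Fintype β] [Fintype γ] [Fintype δ]
    (f : α → β → γ → δ → M) :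
    ∑ a, ∑ b, ∑ c, ∑ d, f a b c d = ∑ d, ∑ a, ∑ b, ∑ c, f a b c d :=
  (Finset.sum_congr rfl fun a _ => aux_rot3 (f a)).trans Finset.sum_comm

lemma aux_rot6 {α β γ δ ε ζ : Type*} [Fintype α] [Fintype β] [Fintype γ] [Fintype δ]
    [Fintype ε] [Fintype ζ] (f : α → β → γ → δ → ε → ζ → M) :
    ∑ a, ∑ b, ∑ c, ∑ d, ∑ e, ∑ g, f a b c d e g
      = ∑ g, ∑ a, ∑ b, ∑ c, ∑ d, ∑ e, f a b c d e g :=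
  (Finset.sum_congr rfl fun a _ =>
    (Finset.sum_congr rfl fun b _ => aux_rot4 (f a b)).trans Finset.sum_comm).trans
    Finset.sum_comm

end SumAux

lemma aux_kron1_conjTranspose {m R : Type*} [Fintype m] [DecidableEq m] [Fintype R]
    [DecidableEq R] (V : Matrix m m ℂ) :
    (V ⊗ₖ (1 : Matrix R R ℂ))ᴴ = Vᴴ ⊗ₖ (1 : Matrix R R ℂ) := by
  ext ⟨a, x⟩ ⟨b, y⟩
  by_cases h : x = y <;>
    simp [Matrix.conjTranspose_apply, Matrix.one_apply, h, eq_comm]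

lemma aux_kron1_conj_apply {m R : Type*} [Fintype m] [DecidableEq m] [Fintype R]
    [DecidableEq R] (V : Matrix m m ℂ) (M : Matrix (m × R) (m × R) ℂ) (a b : m) (x y : R) :
    ((V ⊗ₖ (1 : Matrix R R ℂ)) * M * (V ⊗ₖ (1 : Matrix R R ℂ))ᴴ) (a, x) (b, y)
      = ∑ a', ∑ b', V a a' * M (a', x) (b', y) * star (V b b') := by
  rw [aux_kron1_conjTranspose]
  simp only [Matrix.mul_apply, Fintype.sum_prod_type,
    Matrix.kroneckerMap_apply, Matrix.one_apply, Matrix.conjTranspose_apply,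
    mul_ite, mul_one, mul_zero, ite_mul, zero_mul, one_mul,
    Finset.sum_ite_irrel, Finset.sum_const_zero, Finset.sum_ite_eq, Finset.sum_ite_eq',
    Finset.mem_univ, if_true]
  rw [Finset.sum_comm]
  simp only [Finset.sum_ite_irrel, Finset.sum_const_zero, Finset.sum_ite_eq,
    Finset.mem_univ, if_true, Finset.sum_mul]

lemma aux_mul_mul_conj_apply {m : Type*} [Fintype m] (V M : Matrix m m ℂ) (i j : m) :
    (V * M * Vᴴ) i j = ∑ k, ∑ l, V i k * M k l * star (V j l) := by
  simp only [Matrix.mul_apply, Matrix.conjTranspose_apply, Finset.sum_mul]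
  rw [Finset.sum_comm]

lemma aux_tmap_conj {m γ : Type*} [Fintype m] [DecidableEq m] [Fintype γ] [DecidableEq γ]
    (V : Matrix m m ℂ) (f : Matrix m m ℂ → Matrix m m ℂ)
    (Ψ : Matrix γ γ ℂ → Matrix γ γ ℂ) (ρ : Matrix (m × γ) (m × γ) ℂ) :
    tmap (fun X => V * f X * Vᴴ) Ψ ρ
      = (V ⊗ₖ (1 : Matrix γ γ ℂ)) * tmap f Ψ ρ * (V ⊗ₖ (1 : Matrix γ γ ℂ))ᴴ := by
  ext ⟨p1, p2⟩ ⟨q1, q2⟩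
  rw [aux_kron1_conj_apply]
  simp only [tmap, aux_mul_mul_conj_apply, Finset.mul_sum, Finset.sum_mul]
  rw [aux_rot6, aux_rot6]
  refine Finset.sum_congr rfl fun k _ => Finset.sum_congr rfl fun l _ =>
    Finset.sum_congr rfl fun a _ => Finset.sum_congr rfl fun a' _ =>
    Finset.sum_congr rfl fun c _ => Finset.sum_congr rfl fun c' _ => by ring

section ConjAux

variable {n : ℕ} (V : Matrix (Fin n) (Fin n) ℂ)
  (σ : Matrix (Fin n × Fin n × Fin n × Fin n) (Fin n × Fin n × Fin n × Fin n) ℂ)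

lemma aux_tr24_conj :
    tr24 ((V ⊗ₖ (1 : Matrix (Fin n × Fin n × Fin n) (Fin n × Fin n × Fin n) ℂ)) * σ *
        (V ⊗ₖ (1 : Matrix (Fin n × Fin n × Fin n) (Fin n × Fin n × Fin n) ℂ))ᴴ)
      = (V ⊗ₖ (1 : Matrix (Fin n) (Fin n) ℂ)) * tr24 σ *
        (V ⊗ₖ (1 : Matrix (Fin n) (Fin n) ℂ))ᴴ := by
  ext ⟨a, c⟩ ⟨b, c₂⟩
  rw [aux_kron1_conj_apply]
  simp only [tr24, aux_kron1_conj_apply, Finset.mul_sum, Finset.sum_mul]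
  rw [aux_rot4, aux_rot4]

lemma aux_tr23_conj :
    tr23 ((V ⊗ₖ (1 : Matrix (Fin n × Fin n × Fin n) (Fin n × Fin n × Fin n) ℂ)) * σ *
        (V ⊗ₖ (1 : Matrix (Fin n × Fin n × Fin n) (Fin n × Fin n × Fin n) ℂ))ᴴ)
      = (V ⊗ₖ (1 : Matrix (Fin n) (Fin n) ℂ)) * tr23 σ *
        (V ⊗ₖ (1 : Matrix (Fin n) (Fin n) ℂ))ᴴ := by
  ext ⟨a, c⟩ ⟨b, c₂⟩
  rw [aux_kron1_conj_apply]
  simp only [tr23, aux_kron1_conj_apply, Finset.mul_sum, Finset.sum_mul]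
  rw [aux_rot4, aux_rot4]

lemma aux_sum_conj_collapse (hV : Vᴴ * V = 1) (a' b' : Fin n) (C : ℂ) :
    (∑ a, V a a' * C * star (V a b')) = (if b' = a' then (1 : ℂ) else 0) * C := by
  have : (∑ a, V a a' * C * star (V a b')) = (Vᴴ * V) b' a' * C := by
    rw [Matrix.mul_apply, Finset.sum_mul]
    exact Finset.sum_congr rfl fun a _ => by
      simp only [Matrix.conjTranspose_apply]; ring
  rw [this, hV, Matrix.one_apply]

lemma aux_tr14_conj (hV : Vᴴ * V = 1) :
    tr14 ((V ⊗ₖ (1 : Matrix (Fin n × Fin n × Fin n) (Fin n × Fin n × Fin n) ℂ)) * σ *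
        (V ⊗ₖ (1 : Matrix (Fin n × Fin n × Fin n) (Fin n × Fin n × Fin n) ℂ))ᴴ)
      = tr14 σ := by
  ext ⟨p1, p2⟩ ⟨q1, q2⟩
  simp only [tr14, aux_kron1_conj_apply]
  rw [← aux_rot4]
  simp only [aux_sum_conj_collapse V hV, ite_mul, zero_mul, one_mul,
    Finset.sum_ite_eq', Finset.mem_univ, if_true]
  rw [Finset.sum_comm]

lemma aux_tr13_conj (hV : Vᴴ * V = 1) :
    tr13 ((V ⊗ₖ (1 : Matrix (Fin n × Fin n × Fin n) (Fin n × Fin n × Fin n) ℂ)) * σ *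
        (V ⊗ₖ (1 : Matrix (Fin n × Fin n × Fin n) (Fin n × Fin n × Fin n) ℂ))ᴴ)
      = tr13 σ := by
  ext ⟨p1, p2⟩ ⟨q1, q2⟩
  simp only [tr13, aux_kron1_conj_apply]
  rw [← aux_rot4]
  simp only [aux_sum_conj_collapse V hV, ite_mul, zero_mul, one_mul,
    Finset.sum_ite_eq', Finset.mem_univ, if_true]
  rw [Finset.sum_comm]

lemma aux_isDensity_conj (hV : Vᴴ * V = 1) (hσ : IsDensity σ) :
    IsDensity ((V ⊗ₖ (1 : Matrix (Fin n × Fin n × Fin n) (Fin n × Fin n × Fin n) ℂ)) * σ *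
        (V ⊗ₖ (1 : Matrix (Fin n × Fin n × Fin n) (Fin n × Fin n × Fin n) ℂ))ᴴ) := by
  set W := V ⊗ₖ (1 : Matrix (Fin n × Fin n × Fin n) (Fin n × Fin n × Fin n) ℂ) with hW
  have hWW : Wᴴ * W = 1 := by
    rw [hW, aux_kron1_conjTranspose, ← Matrix.mul_kronecker_mul, hV, Matrix.one_mul,
      Matrix.one_kronecker_one]
  refine ⟨hσ.1.mul_mul_conjTranspose_same W, ?_⟩
  rw [Matrix.trace_mul_comm, ← Matrix.mul_assoc, hWW, Matrix.one_mul, hσ.2]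

lemma aux_conj_conj {k : Type*} [Fintype k] [DecidableEq k] (W' W T : Matrix k k ℂ)
    (h : W' * W = 1) : W' * (W * T * Wᴴ) * W'ᴴ = T := by
  have : W' * (W * T * Wᴴ) * W'ᴴ = (W' * W) * T * (W' * W)ᴴ := by
    rw [Matrix.conjTranspose_mul]
    simp only [Matrix.mul_assoc]
  rw [this, h, Matrix.conjTranspose_one, Matrix.one_mul, Matrix.mul_one]

end ConjAux

/-- the bipartite biconditional state with one unitary channel is Bell
nonlocal iff the one with that channel replaced by the identity channel is. -/
theorem bell_local_unitary_iff_id {n : ℕ} (hn : 1 ≤ n)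
    (ρ : Matrix (Fin n × Fin n) (Fin n × Fin n) ℂ) (hρ : IsDensity ρ)
    (U : Matrix (Fin n) (Fin n) ℂ) (hU : U ∈ Matrix.unitaryGroup (Fin n) ℂ)
    (Φ₂₁ Φ₁₂ Φ₂₂ : Matrix (Fin n) (Fin n) ℂ →ₗ[ℂ] Matrix (Fin n) (Fin n) ℂ)
    (hΦ₂₁ : IsQChannel Φ₂₁) (hΦ₁₂ : IsQChannel Φ₁₂) (hΦ₂₂ : IsQChannel Φ₂₂) :
    (∃ σ : Matrix (Fin n × Fin n × Fin n × Fin n) (Fin n × Fin n × Fin n × Fin n) ℂ,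
      IsDensity σ ∧
      tr24 σ = tmap (fun X => U * X * Uᴴ) (⇑Φ₁₂) ρ ∧
      tr23 σ = tmap (fun X => U * X * Uᴴ) (⇑Φ₂₂) ρ ∧
      tr14 σ = tmap (⇑Φ₂₁) (⇑Φ₁₂) ρ ∧
      tr13 σ = tmap (⇑Φ₂₁) (⇑Φ₂₂) ρ) ↔
    (∃ σ' : Matrix (Fin n × Fin n × Fin n × Fin n) (Fin n × Fin n × Fin n × Fin n) ℂ,
      IsDensity σ' ∧
      tr24 σ' = tmap id (⇑Φ₁₂) ρ ∧
      tr23 σ' = tmap id (⇑Φ₂₂) ρ ∧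
      tr14 σ' = tmap (⇑Φ₂₁) (⇑Φ₁₂) ρ ∧
      tr13 σ' = tmap (⇑Φ₂₁) (⇑Φ₂₂) ρ) := by
  have hU1 : Uᴴ * U = 1 := by
    simpa [Matrix.star_eq_conjTranspose] using hU.1
  have hU2 : U * Uᴴ = 1 := by
    simpa [Matrix.star_eq_conjTranspose] using hU.2
  -- the conjugated tmap equals the conjugation of the identity tmap
  have htm : ∀ (Ψ : Matrix (Fin n) (Fin n) ℂ → Matrix (Fin n) (Fin n) ℂ),
      tmap (fun X => U * X * Uᴴ) Ψ ρ
        = (U ⊗ₖ (1 : Matrix (Fin n) (Fin n) ℂ)) * tmap id Ψ ρ *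
          (U ⊗ₖ (1 : Matrix (Fin n) (Fin n) ℂ))ᴴ := by
    intro Ψ
    have := aux_tmap_conj U id Ψ ρ
    simpa using this
  constructor
  · rintro ⟨σ, hσd, h24, h23, h14, h13⟩
    refine ⟨(Uᴴ ⊗ₖ 1) * σ * (Uᴴ ⊗ₖ 1)ᴴ, aux_isDensity_conj Uᴴ σ (by simpa using hU2) hσd,
      ?_, ?_, ?_, ?_⟩
    · rw [aux_tr24_conj, h24, htm]
      exact aux_conj_conj _ _ _ (by rw [← Matrix.mul_kronecker_mul, hU1, Matrix.one_mul,
        Matrix.one_kronecker_one])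
    · rw [aux_tr23_conj, h23, htm]
      exact aux_conj_conj _ _ _ (by rw [← Matrix.mul_kronecker_mul, hU1, Matrix.one_mul,
        Matrix.one_kronecker_one])
    · rw [aux_tr14_conj Uᴴ σ (by simpa using hU2), h14]
    · rw [aux_tr13_conj Uᴴ σ (by simpa using hU2), h13]
  · rintro ⟨σ', hσd, h24, h23, h14, h13⟩
    refine ⟨(U ⊗ₖ 1) * σ' * (U ⊗ₖ 1)ᴴ, aux_isDensity_conj U σ' hU1 hσd, ?_, ?_, ?_, ?_⟩
    · rw [aux_tr24_conj, h24, htm]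
    · rw [aux_tr23_conj, h23, htm]
    · rw [aux_tr14_conj U σ' hU1, h14]
    · rw [aux_tr13_conj U σ' hU1, h13]

end
end

section
/- For every density matrix ρ indexed by Fin 2 × Fin 2 and all quantum channels Φ₁¹, Φ₂¹, Φ₁², Φ₂² : Matrix (Fin 2) (Fin 2) ℂ → Matrix (Fin 2) (Fin 2) ℂ, the CHSH quantity satisfies the Tsirelson bound X_ρ ≤ 2√2, where E(Φ, Ψ) = Re Tr((Φ ⊗ Ψ)(ρ) · A) with A the diagonal matrix on Fin 2 × Fin 2 with entries A (a,b) (a,b) = (−1)^(a+b), and X_ρ = E(Φ₁¹, Φ₁²) + E(Φ₁¹, Φ₂²) + E(Φ₂¹, Φ₁²) − E(Φ₂¹, Φ₂²). -/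
open Matrix BigOperators
open scoped ComplexOrder Kronecker

noncomputable section

open scoped MatrixOrder in
lemma psd_eq_ct_mul_self {m : Type*} [Fintype m] [DecidableEq m] {A : Matrix m m ℂ}
    (hA : A.PosSemidef) : ∃ S : Matrix m m ℂ, A = Sᴴ * S := by
  obtain ⟨S, hS⟩ := CStarAlgebra.nonneg_iff_eq_star_mul_self.mp hA.nonneg
  exact ⟨S, hS⟩

-- trace of product of PSD matrices is nonneg (in ComplexOrder)
lemma trace_mul_psd_nonneg {m : Type*} [Fintype m] [DecidableEq m]
    {ρ M : Matrix m m ℂ} (hρ : ρ.PosSemidef) (hM : M.PosSemidef) :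
    0 ≤ (ρ * M).trace := by
  obtain ⟨S, rfl⟩ := psd_eq_ct_mul_self hρ
  rw [Matrix.mul_assoc, Matrix.trace_mul_comm]
  have hP : (S * M * Sᴴ).PosSemidef := hM.mul_mul_conjTranspose_same S
  rw [Matrix.trace]
  apply Finset.sum_nonneg
  intro i _
  have := hP.dotProduct_mulVec_nonneg (Pi.single i 1)
  simpa [dotProduct, Matrix.mulVec, Pi.single_apply, Matrix.diag] using this

lemma kron_conjTranspose {α β : Type*} (A : Matrix α α ℂ) (B : Matrix β β ℂ) :
    (A ⊗ₖ B)ᴴ = Aᴴ ⊗ₖ Bᴴ := by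
  ext ⟨a, b⟩ ⟨c, d⟩
  simp [Matrix.conjTranspose_apply, Matrix.kroneckerMap_apply, mul_comm]

lemma kron_posSemidef {α β : Type*} [Fintype α] [Fintype β] [DecidableEq α] [DecidableEq β]
    {A : Matrix α α ℂ} {B : Matrix β β ℂ} (hA : A.PosSemidef) (hB : B.PosSemidef) :
    (A ⊗ₖ B).PosSemidef := by
  obtain ⟨S, rfl⟩ := psd_eq_ct_mul_self hA
  obtain ⟨T, rfl⟩ := psd_eq_ct_mul_self hB
  rw [Matrix.mul_kronecker_mul, ← kron_conjTranspose]
  exact Matrix.posSemidef_conjTranspose_mul_self _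

lemma kron_isHermitian {α β : Type*} {A : Matrix α α ℂ} {B : Matrix β β ℂ}
    (hA : A.IsHermitian) (hB : B.IsHermitian) : (A ⊗ₖ B).IsHermitian := by
  unfold Matrix.IsHermitian
  rw [kron_conjTranspose, hA.eq, hB.eq]


lemma contraction_sq {m : Type*} [Fintype m] [DecidableEq m] {A : Matrix m m ℂ}
    (hA : A.IsHermitian) (h1 : ((1 : Matrix m m ℂ) - A).PosSemidef)
    (h2 : ((1 : Matrix m m ℂ) + A).PosSemidef) :
    ((1 : Matrix m m ℂ) - A * A).PosSemidef := by
  -- eigenvalue bounds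
  have hbound : ∀ i, (hA.eigenvalues i) ^ 2 ≤ 1 := by
    intro i
    set v : m → ℂ := ⇑(hA.eigenvectorBasis i) with hv
    have hvv : star v ⬝ᵥ v = 1 := by
      have h := hA.eigenvectorBasis.orthonormal.1 i
      have h2 := EuclideanSpace.inner_eq_star_dotProduct (𝕜 := ℂ)
        (hA.eigenvectorBasis i) (hA.eigenvectorBasis i)
      rw [inner_self_eq_norm_sq_to_K, h] at h2
      rw [dotProduct_comm]
      simpa using h2.symm
    have hAv : star v ⬝ᵥ A *ᵥ v = (hA.eigenvalues i : ℂ) := by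
      rw [hA.mulVec_eigenvectorBasis]
      rw [dotProduct_smul]
      rw [hvv]
      simp [RCLike.real_smul_eq_coe_mul]
    have key1 := h1.dotProduct_mulVec_nonneg v
    have key2 := h2.dotProduct_mulVec_nonneg v
    rw [sub_mulVec, dotProduct_sub, one_mulVec, hvv, hAv] at key1
    rw [add_mulVec, dotProduct_add, one_mulVec, hvv, hAv] at key2
    rw [Complex.le_def] at key1 key2
    simp only [Complex.sub_re, Complex.one_re, Complex.ofReal_re, Complex.zero_re,
      Complex.add_re] at key1 key2
    nlinarith [key1.1, key2.1]
  -- spectral decomposition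
  have hspec := hA.spectral_theorem
  set U : Matrix m m ℂ := ↑(hA.eigenvectorUnitary) with hU
  set D : Matrix m m ℂ := Matrix.diagonal (RCLike.ofReal ∘ hA.eigenvalues) with hD
  have hUU : U * star U = 1 := Matrix.mem_unitaryGroup_iff.mp hA.eigenvectorUnitary.2
  have hUU' : star U * U = 1 := Matrix.mem_unitaryGroup_iff'.mp hA.eigenvectorUnitary.2
  have hAA : (1 : Matrix m m ℂ) - A * A = U * ((1 : Matrix m m ℂ) - D * D) * star U := by
    rw [Matrix.mul_sub, Matrix.sub_mul, Matrix.mul_one, hUU]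
    congr 1
    rw [hspec]
    calc U * D * star U * (U * D * star U) = U * D * (star U * U) * D * star U := by
          noncomm_ring
      _ = U * (D * D) * star U := by rw [hUU']; noncomm_ring
  rw [hAA]
  have : ((1 : Matrix m m ℂ) - D * D).PosSemidef := by
    rw [hD, Matrix.diagonal_mul_diagonal, ← Matrix.diagonal_one, Matrix.diagonal_sub]
    refine Matrix.posSemidef_diagonal_iff.mpr fun i => ?_
    have hb := hbound i
    simp only [Pi.sub_apply, Pi.one_apply, Function.comp_apply, RCLike.ofReal,
      Algebra.algebraMap_self, Complex.coe_algebraMap]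
    rw [show (1 : ℂ) - (hA.eigenvalues i : ℂ) * (hA.eigenvalues i : ℂ)
        = ((1 - hA.eigenvalues i ^ 2 : ℝ) : ℂ) by push_cast; ring]
    rw [← Complex.ofReal_zero, Complex.real_le_real]
    linarith
  have h := this.mul_mul_conjTranspose_same U
  simpa [Matrix.star_eq_conjTranspose] using h


lemma key_sos {m : Type*} [Fintype m] [DecidableEq m] (a1 a2 b1 b2 : Matrix m m ℂ)
    (ha1 : a1.IsHermitian) (ha2 : a2.IsHermitian) (hb1 : b1.IsHermitian) (hb2 : b2.IsHermitian)
    (hc11 : a1 * b1 = b1 * a1) (hc12 : a1 * b2 = b2 * a1)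
    (hc21 : a2 * b1 = b1 * a2) (hc22 : a2 * b2 = b2 * a2)
    (h1 : ((1 : Matrix m m ℂ) - a1 * a1).PosSemidef)
    (h2 : ((1 : Matrix m m ℂ) - a2 * a2).PosSemidef)
    (h3 : ((1 : Matrix m m ℂ) - b1 * b1).PosSemidef)
    (h4 : ((1 : Matrix m m ℂ) - b2 * b2).PosSemidef) :
    ((8 : ℂ) • (1 : Matrix m m ℂ) -
      ((2 : ℂ) * (Real.sqrt 2 : ℂ)) • (a1 * b1 + a1 * b2 + a2 * b1 - a2 * b2)).PosSemidef := by
  set c : ℂ := ((Real.sqrt 2 : ℝ) : ℂ) with hc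
  have hc2 : c * c = 2 := by
    rw [hc, ← Complex.ofReal_mul, Real.mul_self_sqrt (by norm_num)]
    norm_num
  have hcr : star c = c := Complex.conj_ofReal _
  set P : Matrix m m ℂ := c • a1 - (b1 + b2) with hP
  set Q : Matrix m m ℂ := c • a2 - (b1 - b2) with hQ
  have hPh : Pᴴ = P := by
    rw [hP, conjTranspose_sub, conjTranspose_smul, conjTranspose_add, ha1.eq, hb1.eq, hb2.eq, hcr]
  have hQh : Qᴴ = Q := by
    rw [hQ, conjTranspose_sub, conjTranspose_smul, conjTranspose_sub, ha2.eq, hb1.eq, hb2.eq, hcr]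
  have hPP : (P * P).PosSemidef := by
    have := Matrix.posSemidef_conjTranspose_mul_self P
    rwa [hPh] at this
  have hQQ : (Q * Q).PosSemidef := by
    have := Matrix.posSemidef_conjTranspose_mul_self Q
    rwa [hQh] at this
  have identity : (8 : ℂ) • (1 : Matrix m m ℂ) -
      ((2 : ℂ) * c) • (a1 * b1 + a1 * b2 + a2 * b1 - a2 * b2) =
      (((1 : Matrix m m ℂ) - a1 * a1) + ((1 : Matrix m m ℂ) - a1 * a1)) +
      (((1 : Matrix m m ℂ) - a2 * a2) + ((1 : Matrix m m ℂ) - a2 * a2)) +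
      (((1 : Matrix m m ℂ) - b1 * b1) + ((1 : Matrix m m ℂ) - b1 * b1)) +
      (((1 : Matrix m m ℂ) - b2 * b2) + ((1 : Matrix m m ℂ) - b2 * b2)) +
      P * P + Q * Q := by
    rw [hP, hQ]
    simp only [Matrix.sub_mul, Matrix.mul_sub, Matrix.add_mul, Matrix.mul_add,
      Matrix.smul_mul, Matrix.mul_smul, smul_smul, hc2, smul_sub, smul_add,
      hc11, hc12, hc21, hc22]
    module
  rw [identity]
  exact ((((((h1.add h1).add (h2.add h2)).add (h3.add h3)).add (h4.add h4)).add hPP).add hQQ)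

abbrev M2 := Matrix (Fin 2) (Fin 2) ℂ

lemma lin_apply {ι κ : Type*} [Fintype ι] [DecidableEq ι]
    (Φ : Matrix ι ι ℂ →ₗ[ℂ] Matrix κ κ ℂ) (X : Matrix ι ι ℂ) (p q : κ) :
    Φ X p q = ∑ i, ∑ j, X i j * Φ (Matrix.single i j 1) p q := by
  conv_lhs => rw [Matrix.matrix_eq_sum_single X]
  rw [map_sum, Matrix.sum_apply]
  refine Finset.sum_congr rfl fun i _ => ?_
  rw [map_sum, Matrix.sum_apply]
  refine Finset.sum_congr rfl fun j _ => ?_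
  rw [show Matrix.single i j (X i j) = X i j • Matrix.single i j (1 : ℂ) by
    rw [Matrix.smul_single]; rw [smul_eq_mul, mul_one]]
  rw [_root_.map_smul]
  simp

def obs (Φ : M2 →ₗ[ℂ] M2) : M2 :=
  fun i j => ∑ p, Φ (Matrix.single j i 1) p p * (-1 : ℂ) ^ (p : ℕ)

lemma choi_herm {Φ : M2 →ₗ[ℂ] M2} (h : IsQChannel Φ) (i j p q : Fin 2) :
    Φ (Matrix.single i j 1) p q
      = star (Φ (Matrix.single j i 1) q p) := by
  have := h.2.isHermitian
  have h2 := congrFun (congrFun this ((p, i) : Fin 2 × Fin 2)) ((q, j) : Fin 2 × Fin 2)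
  simpa [Matrix.conjTranspose_apply, choi] using h2.symm

lemma obs_herm {Φ : M2 →ₗ[ℂ] M2} (h : IsQChannel Φ) : (obs Φ).IsHermitian := by
  ext i j
  rw [Matrix.conjTranspose_apply, obs, obs, star_sum]
  refine Finset.sum_congr rfl fun p _ => ?_
  rw [choi_herm h j i p p]
  simp

lemma channel_pos_rank_one {Φ : M2 →ₗ[ℂ] M2} (h : IsQChannel Φ) (v : Fin 2 → ℂ) :
    (Φ (Matrix.vecMulVec v (star v))).PosSemidef := by
  refine Matrix.PosSemidef.of_dotProduct_mulVec_nonneg ?_ ?_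
  · ext p q
    rw [Matrix.conjTranspose_apply, lin_apply, lin_apply]
    simp only [star_sum]
    rw [Finset.sum_comm]
    refine Finset.sum_congr rfl fun i _ => Finset.sum_congr rfl fun j _ => ?_
    rw [choi_herm h j i q p]
    simp only [star_mul', star_star, Matrix.vecMulVec_apply, Pi.star_apply]
    ring
  · intro u
    have hpsd := h.2.dotProduct_mulVec_nonneg (fun pi : Fin 2 × Fin 2 => u pi.1 * star (v pi.2))
    have hW : ∀ p q, Φ (Matrix.vecMulVec v (star v)) p q
        = ∑ i, ∑ j, (v i * star (v j)) * Φ (Matrix.single i j 1) p q := by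
      intro p q
      rw [lin_apply]
      simp [Matrix.vecMulVec_apply]
    have heq : star u ⬝ᵥ Φ (Matrix.vecMulVec v (star v)) *ᵥ u
        = star (fun pi : Fin 2 × Fin 2 => u pi.1 * star (v pi.2)) ⬝ᵥ
          choi Φ *ᵥ (fun pi => u pi.1 * star (v pi.2)) := by
      simp only [dotProduct, Matrix.mulVec, Fintype.sum_prod_type, choi,
        Pi.star_apply, hW, star_mul', star_star,
        Finset.mul_sum, Finset.sum_mul, Fin.sum_univ_two]
      ring
    rw [heq]
    exact hpsd

lemma obs_contraction {Φ : M2 →ₗ[ℂ] M2} (h : IsQChannel Φ) :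
    ((1 : M2) - obs Φ).PosSemidef ∧ ((1 : M2) + obs Φ).PosSemidef := by
  have hW : ∀ v : Fin 2 → ℂ, ∀ p, 0 ≤ Φ (Matrix.vecMulVec v (star v)) p p := by
    intro v p
    have hpsd := channel_pos_rank_one h v
    have := hpsd.dotProduct_mulVec_nonneg (Pi.single p 1)
    simpa [dotProduct, Matrix.mulVec, Pi.single_apply, Finset.mul_sum] using this
  have htr : ∀ v : Fin 2 → ℂ, star v ⬝ᵥ v
      = Φ (Matrix.vecMulVec v (star v)) 0 0 + Φ (Matrix.vecMulVec v (star v)) 1 1 := by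
    intro v
    have h1 := h.1 (Matrix.vecMulVec v (star v))
    rw [Matrix.trace, Matrix.trace] at h1
    simp only [Matrix.diag, Fin.sum_univ_two, Matrix.vecMulVec_apply, Pi.star_apply] at h1
    rw [h1]
    simp only [dotProduct, Fin.sum_univ_two, Pi.star_apply]
    ring
  have hobs : ∀ v : Fin 2 → ℂ, star v ⬝ᵥ obs Φ *ᵥ v
      = Φ (Matrix.vecMulVec v (star v)) 0 0 - Φ (Matrix.vecMulVec v (star v)) 1 1 := by
    intro v
    have hWe : ∀ p q, Φ (Matrix.vecMulVec v (star v)) p q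
        = ∑ i, ∑ j, (v i * star (v j)) * Φ (Matrix.single i j 1) p q := by
      intro p q
      rw [lin_apply]
      simp [Matrix.vecMulVec_apply]
    simp only [dotProduct, Matrix.mulVec, obs, hWe, Pi.star_apply,
      Fin.sum_univ_two, Finset.mul_sum, Finset.sum_mul]
    norm_num
    ring
  have hherm := obs_herm h
  constructor
  · refine Matrix.PosSemidef.of_dotProduct_mulVec_nonneg ?_ ?_
    · rw [Matrix.IsHermitian, Matrix.conjTranspose_sub, Matrix.conjTranspose_one, hherm.eq]
    · intro v
      have e : star v ⬝ᵥ ((1 : M2) - obs Φ) *ᵥ v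
          = Φ (Matrix.vecMulVec v (star v)) 1 1 + Φ (Matrix.vecMulVec v (star v)) 1 1 := by
        rw [Matrix.sub_mulVec, dotProduct_sub, Matrix.one_mulVec]
        linear_combination htr v - hobs v
      rw [e]
      exact add_nonneg (hW v 1) (hW v 1)
  · refine Matrix.PosSemidef.of_dotProduct_mulVec_nonneg ?_ ?_
    · rw [Matrix.IsHermitian, Matrix.conjTranspose_add, Matrix.conjTranspose_one, hherm.eq]
    · intro v
      have e : star v ⬝ᵥ ((1 : M2) + obs Φ) *ᵥ v
          = Φ (Matrix.vecMulVec v (star v)) 0 0 + Φ (Matrix.vecMulVec v (star v)) 0 0 := by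
        rw [Matrix.add_mulVec, dotProduct_add, Matrix.one_mulVec]
        linear_combination htr v + hobs v
      rw [e]
      exact add_nonneg (hW v 0) (hW v 0)

lemma sub_kron {α β : Type*} (A B : Matrix α α ℂ) (C : Matrix β β ℂ) :
    (A - B) ⊗ₖ C = A ⊗ₖ C - B ⊗ₖ C := by
  ext ⟨a, b⟩ ⟨c, d⟩
  simp [Matrix.kroneckerMap_apply, sub_mul]

lemma kron_sub {α β : Type*} (A : Matrix α α ℂ) (B C : Matrix β β ℂ) :
    A ⊗ₖ (B - C) = A ⊗ₖ B - A ⊗ₖ C := by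
  ext ⟨a, b⟩ ⟨c, d⟩
  simp [Matrix.kroneckerMap_apply, mul_sub]


/-- The CHSH observable `A = |00⟩⟨00| − |01⟩⟨01| − |10⟩⟨10| + |11⟩⟨11|`. -/
def chshA : Matrix (Fin 2 × Fin 2) (Fin 2 × Fin 2) ℂ :=
  fun p q => if p = q then ((-1 : ℂ)) ^ ((p.1 : ℕ) + (p.2 : ℕ)) else 0


lemma trace_corr (ρ : Matrix (Fin 2 × Fin 2) (Fin 2 × Fin 2) ℂ) (Φ Ψ : M2 →ₗ[ℂ] M2) :
    (tmap (⇑Φ) (⇑Ψ) ρ * chshA).trace = (ρ * (obs Φ ⊗ₖ obs Ψ)).trace := by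
  simp only [Matrix.trace, Matrix.diag, Matrix.mul_apply, tmap, chshA, obs,
    Matrix.kroneckerMap_apply, Fintype.sum_prod_type, Fin.sum_univ_two,
    Finset.sum_mul, Finset.mul_sum, Prod.mk.injEq, Fin.isValue]
  norm_num
  ring

/-- The correlation `E(Φ, Ψ) = Re Tr((Φ ⊗ Ψ)(ρ) · A)`. -/
def corr (ρ : Matrix (Fin 2 × Fin 2) (Fin 2 × Fin 2) ℂ)
    (Φ Ψ : Matrix (Fin 2) (Fin 2) ℂ →ₗ[ℂ] Matrix (Fin 2) (Fin 2) ℂ) : ℝ :=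
  ((tmap (⇑Φ) (⇑Ψ) ρ * chshA).trace).re

/-- The CHSH quantity `X_ρ`. -/
def chshX (ρ : Matrix (Fin 2 × Fin 2) (Fin 2 × Fin 2) ℂ)
    (Φ₁₁ Φ₂₁ Φ₁₂ Φ₂₂ : Matrix (Fin 2) (Fin 2) ℂ →ₗ[ℂ] Matrix (Fin 2) (Fin 2) ℂ) : ℝ :=
  corr ρ Φ₁₁ Φ₁₂ + corr ρ Φ₁₁ Φ₂₂ + corr ρ Φ₂₁ Φ₁₂ - corr ρ Φ₂₁ Φ₂₂

/-- the Tsirelson bound `X_ρ ≤ 2√2` for the CHSH quantity of quantum channels. -/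
theorem chsh_tsirelson
    (ρ : Matrix (Fin 2 × Fin 2) (Fin 2 × Fin 2) ℂ) (hρ : IsDensity ρ)
    (Φ₁₁ Φ₂₁ Φ₁₂ Φ₂₂ : Matrix (Fin 2) (Fin 2) ℂ →ₗ[ℂ] Matrix (Fin 2) (Fin 2) ℂ)
    (hΦ₁₁ : IsQChannel Φ₁₁) (hΦ₂₁ : IsQChannel Φ₂₁)
    (hΦ₁₂ : IsQChannel Φ₁₂) (hΦ₂₂ : IsQChannel Φ₂₂) :
    chshX ρ Φ₁₁ Φ₂₁ Φ₁₂ Φ₂₂ ≤ 2 * Real.sqrt 2 := by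
  classical
  obtain ⟨hρpsd, hρtr⟩ := hρ
  set A1 := obs Φ₁₁ with hA1def
  set A2 := obs Φ₂₁ with hA2def
  set B1 := obs Φ₁₂ with hB1def
  set B2 := obs Φ₂₂ with hB2def
  have hsqA1 : ((1 : M2) - A1 * A1).PosSemidef :=
    contraction_sq (obs_herm hΦ₁₁) (obs_contraction hΦ₁₁).1 (obs_contraction hΦ₁₁).2
  have hsqA2 : ((1 : M2) - A2 * A2).PosSemidef :=
    contraction_sq (obs_herm hΦ₂₁) (obs_contraction hΦ₂₁).1 (obs_contraction hΦ₂₁).2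
  have hsqB1 : ((1 : M2) - B1 * B1).PosSemidef :=
    contraction_sq (obs_herm hΦ₁₂) (obs_contraction hΦ₁₂).1 (obs_contraction hΦ₁₂).2
  have hsqB2 : ((1 : M2) - B2 * B2).PosSemidef :=
    contraction_sq (obs_herm hΦ₂₂) (obs_contraction hΦ₂₂).1 (obs_contraction hΦ₂₂).2
  -- lift to the tensor level
  have hmul : ∀ X Y : M2, (X ⊗ₖ (1 : M2)) * ((1 : M2) ⊗ₖ Y) = X ⊗ₖ Y := by
    intro X Y
    rw [← Matrix.mul_kronecker_mul, mul_one, one_mul]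
  have hmul' : ∀ X Y : M2, ((1 : M2) ⊗ₖ Y) * (X ⊗ₖ (1 : M2)) = X ⊗ₖ Y := by
    intro X Y
    rw [← Matrix.mul_kronecker_mul, mul_one, one_mul]
  have haa : ∀ X : M2, ((1 : Matrix (Fin 2 × Fin 2) (Fin 2 × Fin 2) ℂ)
      - (X ⊗ₖ (1 : M2)) * (X ⊗ₖ (1 : M2))) = ((1 : M2) - X * X) ⊗ₖ (1 : M2) := by
    intro X
    rw [← Matrix.mul_kronecker_mul, one_mul, sub_kron, Matrix.one_kronecker_one]
  have hbb : ∀ Y : M2, ((1 : Matrix (Fin 2 × Fin 2) (Fin 2 × Fin 2) ℂ)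
      - ((1 : M2) ⊗ₖ Y) * ((1 : M2) ⊗ₖ Y)) = (1 : M2) ⊗ₖ ((1 : M2) - Y * Y) := by
    intro Y
    rw [← Matrix.mul_kronecker_mul, one_mul, kron_sub, Matrix.one_kronecker_one]
  have hkey := key_sos (A1 ⊗ₖ (1 : M2)) (A2 ⊗ₖ (1 : M2)) ((1 : M2) ⊗ₖ B1) ((1 : M2) ⊗ₖ B2)
    (kron_isHermitian (obs_herm hΦ₁₁) Matrix.isHermitian_one)
    (kron_isHermitian (obs_herm hΦ₂₁) Matrix.isHermitian_one)
    (kron_isHermitian Matrix.isHermitian_one (obs_herm hΦ₁₂))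
    (kron_isHermitian Matrix.isHermitian_one (obs_herm hΦ₂₂))
    (by rw [hmul, hmul']) (by rw [hmul, hmul']) (by rw [hmul, hmul']) (by rw [hmul, hmul'])
    (by rw [haa]; exact kron_posSemidef hsqA1 Matrix.PosSemidef.one)
    (by rw [haa]; exact kron_posSemidef hsqA2 Matrix.PosSemidef.one)
    (by rw [hbb]; exact kron_posSemidef Matrix.PosSemidef.one hsqB1)
    (by rw [hbb]; exact kron_posSemidef Matrix.PosSemidef.one hsqB2)
  rw [hmul, hmul, hmul, hmul] at hkey
  set C : Matrix (Fin 2 × Fin 2) (Fin 2 × Fin 2) ℂ :=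
    A1 ⊗ₖ B1 + A1 ⊗ₖ B2 + A2 ⊗ₖ B1 - A2 ⊗ₖ B2 with hCdef
  have h0 := trace_mul_psd_nonneg hρpsd hkey
  have hexp : (ρ * ((8 : ℂ) • (1 : Matrix (Fin 2 × Fin 2) (Fin 2 × Fin 2) ℂ)
      - ((2 : ℂ) * (Real.sqrt 2 : ℂ)) • C)).trace
      = (8 : ℂ) - ((2 * Real.sqrt 2 : ℝ) : ℂ) * (ρ * C).trace := by
    rw [Matrix.mul_sub, Matrix.trace_sub, Matrix.mul_smul, Matrix.mul_smul,
      Matrix.trace_smul, Matrix.trace_smul, Matrix.mul_one, hρtr]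
    simp only [smul_eq_mul]
    push_cast
    ring
  rw [hexp] at h0
  rw [Complex.le_def] at h0
  have h0re := h0.1
  rw [Complex.sub_re, Complex.re_ofReal_mul] at h0re
  simp only [Complex.zero_re] at h0re
  -- identify chshX with the real part of the trace
  have hX : chshX ρ Φ₁₁ Φ₂₁ Φ₁₂ Φ₂₂ = ((ρ * C).trace).re := by
    have hC : (ρ * C).trace = (ρ * (A1 ⊗ₖ B1)).trace + (ρ * (A1 ⊗ₖ B2)).trace
        + (ρ * (A2 ⊗ₖ B1)).trace - (ρ * (A2 ⊗ₖ B2)).trace := by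
      rw [hCdef, Matrix.mul_sub, Matrix.mul_add, Matrix.mul_add,
        Matrix.trace_sub, Matrix.trace_add, Matrix.trace_add]
    rw [hC]
    simp only [chshX, corr, Complex.add_re, Complex.sub_re,
      trace_corr ρ Φ₁₁ Φ₁₂, trace_corr ρ Φ₁₁ Φ₂₂, trace_corr ρ Φ₂₁ Φ₁₂, trace_corr ρ Φ₂₁ Φ₂₂,
      hA1def, hA2def, hB1def, hB2def]
  rw [hX]
  norm_num at h0re
  have hs2 : Real.sqrt 2 * Real.sqrt 2 = 2 := Real.mul_self_sqrt (by norm_num)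
  have hs2pos : 0 < Real.sqrt 2 := Real.sqrt_pos.mpr (by norm_num)
  nlinarith [h0re, hs2, hs2pos]


end
end

section
/- Let |W⟩ = (|001⟩ + |010⟩ + |100⟩)/√3 ∈ ℂ² ⊗ ℂ² ⊗ ℂ² and ρ_W = Tr₃(|W⟩⟨W|). Then there is no density matrix σ indexed by Fin 2 × Fin 2 × Fin 2 × Fin 2 such that Tr₁₃ σ = ρ_W, Tr₁₄ σ = ρ_W, Tr₂₃ σ = ρ_W and Tr₂₄ σ = ρ_W. (Hence the bipartite biconditional state built from ρ_W and four identity channels is Bell nonlocal, even though ρ_W is not steerable by any pair of channels; steering is not necessary for Bell nonlocality of channels.) -/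
open Matrix BigOperators
open scoped ComplexOrder

noncomputable section

section Aux
variable {ι : Type*} [Fintype ι] [DecidableEq ι]

lemma diag_nonneg' {M : Matrix ι ι ℂ} (h : M.PosSemidef) (p : ι) : 0 ≤ M p p := by
  have := h.dotProduct_mulVec_nonneg (Pi.single p 1)
  simpa [Matrix.mulVec_single, dotProduct, Pi.single_apply, apply_ite] using this

lemma entry_zero' {M : Matrix ι ι ℂ} (h : M.PosSemidef) {q : ι} (hq : M q q = 0) (p : ι) :
    M p q = 0 := by
  have h0 : star (Pi.single q 1) ⬝ᵥ M *ᵥ (Pi.single q 1 : ι → ℂ) = 0 := by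
    simpa [Matrix.mulVec_single, dotProduct, Pi.single_apply, apply_ite] using hq
  have := (h.dotProduct_mulVec_zero_iff (Pi.single q 1)).mp h0
  have := congrFun this p
  simpa [Matrix.mulVec_single] using this

lemma row_zero' {M : Matrix ι ι ℂ} (h : M.PosSemidef) {p : ι} (hp : M p p = 0) (q : ι) :
    M p q = 0 := by
  have := entry_zero' h hp q
  have h2 : M p q = star (M q p) := (h.1.apply p q).symm
  rw [h2, this, star_zero]

lemma key_ineq' {M : Matrix ι ι ℂ} (h : M.PosSemidef) {p q : ι} (hpq : p ≠ q)
    (hval : M p q = 1/3) : (2/3 : ℂ) ≤ M p p + M q q := by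
  set x : ι → ℂ := Pi.single p 1 - Pi.single q 1 with hx
  have h0 := h.dotProduct_mulVec_nonneg x
  have hqp : M q p = 1/3 := by
    have h1 : star (M q p) = 1/3 := (h.1.apply p q).trans hval
    have h2 := congrArg star h1
    rw [star_star] at h2
    rw [h2]
    simp [Complex.star_def, map_div₀]
  have hmv : M *ᵥ x = fun i => M i p - M i q := by
    funext i
    simp [hx, Matrix.mulVec_sub, Matrix.mulVec_single]
  have hsx : star x = x := by
    funext i
    simp only [hx, Pi.star_apply, Pi.sub_apply, Pi.single_apply]
    split_ifs <;> simp
  rw [hsx, hmv, hx] at h0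
  have hdp : (Pi.single p 1 - Pi.single q 1 : ι → ℂ) ⬝ᵥ (fun i => M i p - M i q)
      = M p p + M q q - M p q - M q p := by
    rw [sub_dotProduct, single_dotProduct, single_dotProduct]
    simp [if_neg hpq, if_neg hpq.symm, Pi.single_apply]
    ring
  rw [hdp, hval, hqp] at h0
  rw [show M p p + M q q - 1/3 - 1/3 = (M p p + M q q) - (2/3 : ℂ) by ring] at h0
  rwa [← sub_nonneg]

lemma sum4_zero' {a b c d : ℂ} (ha : 0 ≤ a) (hb : 0 ≤ b) (hc : 0 ≤ c) (hd : 0 ≤ d)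
    (h : a + b + (c + d) = 0) : a = 0 ∧ b = 0 ∧ c = 0 ∧ d = 0 := by
  obtain ⟨h1, h2⟩ :=
    (add_eq_zero_iff_of_nonneg (add_nonneg ha hb) (add_nonneg hc hd)).mp h
  obtain ⟨ha0, hb0⟩ := (add_eq_zero_iff_of_nonneg ha hb).mp h1
  obtain ⟨hc0, hd0⟩ := (add_eq_zero_iff_of_nonneg hc hd).mp h2
  exact ⟨ha0, hb0, hc0, hd0⟩

end Aux

lemma rhoW_11 : rhoW (1, 1) (1, 1) = 0 := by
  simp [rhoW, ptrace3, wProj, wVec, Fin.sum_univ_two, Prod.ext_iff]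

lemma rhoW_od : rhoW (0, 1) (1, 0) = 1/3 := by
  have h3 : ((Real.sqrt 3)⁻¹ : ℝ) * (Real.sqrt 3)⁻¹ = 1/3 := by
    rw [← mul_inv, Real.mul_self_sqrt (by norm_num)]
    norm_num
  simp [rhoW, ptrace3, wProj, wVec, Fin.sum_univ_two, Prod.ext_iff, Complex.conj_ofReal]
  rw [← Complex.ofReal_inv, ← Complex.ofReal_mul, h3]
  norm_num

/-- there is no four-partite density matrix all four of whose relevant
bipartite marginals equal `ρ_W`; hence the biconditional state built from `ρ_W` and four
identity channels is Bell nonlocal, although `ρ_W` is not steerable by any pair of channels. -/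
theorem rhoW_bell_nonlocal :
    ¬ ∃ σ : Matrix (Fin 2 × Fin 2 × Fin 2 × Fin 2) (Fin 2 × Fin 2 × Fin 2 × Fin 2) ℂ,
      IsDensity σ ∧ tr13 σ = rhoW ∧ tr14 σ = rhoW ∧ tr23 σ = rhoW ∧ tr24 σ = rhoW := by
  rintro ⟨σ, ⟨hpsd, htr⟩, h13, h14, h23, h24⟩
  have hd : ∀ p, 0 ≤ σ p p := diag_nonneg' hpsd
  -- zero diagonals from tr23 at ((1,1),(1,1))
  have e23 := congrFun (congrFun h23 (1, 1)) (1, 1)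
  rw [rhoW_11] at e23
  simp only [tr23, Fin.sum_univ_two] at e23
  obtain ⟨z1, z2, z3, z4⟩ := sum4_zero' (hd _) (hd _) (hd _) (hd _) e23
  -- z1 : σ (1,0,0,1) _ = 0, z2 : σ (1,0,1,1), z3 : σ (1,1,0,1), z4 : σ (1,1,1,1)
  have e14 := congrFun (congrFun h14 (1, 1)) (1, 1)
  rw [rhoW_11] at e14
  simp only [tr14, Fin.sum_univ_two] at e14
  obtain ⟨w1, w2, w3, w4⟩ := sum4_zero' (hd _) (hd _) (hd _) (hd _) e14
  -- w1 : σ (0,1,1,0) _ = 0, w2 : σ (0,1,1,1), w3 : σ (1,1,1,0), w4 : σ (1,1,1,1)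
  -- off-diagonal from tr24 at ((0,1),(1,0))
  have e24 := congrFun (congrFun h24 (0, 1)) (1, 0)
  rw [rhoW_od] at e24
  simp only [tr24, Fin.sum_univ_two] at e24
  rw [entry_zero' hpsd z1 ((0:Fin 2), (0:Fin 2), (1:Fin 2), (1:Fin 2)),
      row_zero' hpsd w1 ((1:Fin 2), (1:Fin 2), (0:Fin 2), (0:Fin 2)),
      entry_zero' hpsd z3 ((0:Fin 2), (1:Fin 2), (1:Fin 2), (1:Fin 2))] at e24
  have o1 : σ (0, 0, 1, 0) (1, 0, 0, 0) = 1/3 := by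
    rw [← e24]; ring
  -- off-diagonal from tr13 at ((0,1),(1,0))
  have e13 := congrFun (congrFun h13 (0, 1)) (1, 0)
  rw [rhoW_od] at e13
  simp only [tr13, Fin.sum_univ_two] at e13
  rw [entry_zero' hpsd w1 ((0:Fin 2), (0:Fin 2), (1:Fin 2), (1:Fin 2)),
      row_zero' hpsd z1 ((1:Fin 2), (1:Fin 2), (0:Fin 2), (0:Fin 2)),
      entry_zero' hpsd w3 ((1:Fin 2), (0:Fin 2), (1:Fin 2), (1:Fin 2))] at e13
  have o2 : σ (0, 0, 0, 1) (0, 1, 0, 0) = 1/3 := by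
    rw [← e13]; ring
  -- quadratic form inequalities
  have i1 : (2/3 : ℂ) ≤ σ (0, 0, 1, 0) (0, 0, 1, 0) + σ (1, 0, 0, 0) (1, 0, 0, 0) :=
    key_ineq' hpsd (by decide) o1
  have i2 : (2/3 : ℂ) ≤ σ (0, 0, 0, 1) (0, 0, 0, 1) + σ (0, 1, 0, 0) (0, 1, 0, 0) :=
    key_ineq' hpsd (by decide) o2
  -- the four distinguished diagonal entries are at most the trace
  set S : Finset (Fin 2 × Fin 2 × Fin 2 × Fin 2) :=
    {(0, 0, 1, 0), (1, 0, 0, 0), (0, 0, 0, 1), (0, 1, 0, 0)} with hS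
  have hsub : ∑ p ∈ S, σ p p ≤ ∑ p, σ p p :=
    Finset.sum_le_sum_of_subset_of_nonneg (Finset.subset_univ _) (fun p _ _ => hd p)
  have hSsum : ∑ p ∈ S, σ p p = σ (0, 0, 1, 0) (0, 0, 1, 0) + (σ (1, 0, 0, 0) (1, 0, 0, 0)
      + (σ (0, 0, 0, 1) (0, 0, 0, 1) + σ (0, 1, 0, 0) (0, 1, 0, 0))) := by
    rw [hS, Finset.sum_insert (by decide), Finset.sum_insert (by decide),
      Finset.sum_insert (by decide), Finset.sum_singleton]
  have htr2 : ∑ p, σ p p = 1 := by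
    simpa [Matrix.trace, Matrix.diag] using htr
  have hfinal : (2/3 : ℂ) + 2/3 ≤ 1 := by
    calc (2/3 : ℂ) + 2/3
        ≤ (σ (0, 0, 1, 0) (0, 0, 1, 0) + σ (1, 0, 0, 0) (1, 0, 0, 0))
          + (σ (0, 0, 0, 1) (0, 0, 0, 1) + σ (0, 1, 0, 0) (0, 1, 0, 0)) := add_le_add i1 i2
      _ = ∑ p ∈ S, σ p p := by rw [hSsum]; ring
      _ ≤ ∑ p, σ p p := hsub
      _ = 1 := htr2
  rw [Complex.le_def] at hfinal
  norm_num at hfinal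


end
end
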